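/- arXiv:2103.09383 — 2 statements merged into one kernel-verified Lean document; each statement's English description precedes it below -/
import Mathlib

section
/- In the planted matching model with P ≪ Q, let m, m* be perfect matchings of K_{n,n} with |m △ m*| = 2ℓ. Then for each x ≥ 0, P{ Δ(m) ≥ xℓ | M* = m* } ≤ ( (d/n) · exp(−(α + x/2)) )^ℓ, where α = −2 log B(P, Q). -/
open MeasureTheory
open scoped ENNReal BigOperators

noncomputable section

namespace PlantedMatching

/-- Perfect matchings of `K_{n,n}` are identified with permutations of `Fin n`:
the matching associated to `π` consists of the edges `(i, π i)`. We equip the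
(finite) set of perfect matchings with the discrete σ-algebra. -/
instance instMeasurablePerm {n : ℕ} : MeasurableSpace (Equiv.Perm (Fin n)) := ⊤

/-- Number of left vertices on which two matchings disagree;
`|M △ M'| = 2 * hamming`. -/
def hamming {n : ℕ} (π σ : Equiv.Perm (Fin n)) : ℕ :=
  (Finset.univ.filter fun i => π i ≠ σ i).card

/-- The reconstruction error `ℓ(M, M') = |M △ M'| / n`, valued in `ℝ≥0∞`. -/
def err {n : ℕ} (π σ : Equiv.Perm (Fin n)) : ℝ≥0∞ :=
  ((2 * hamming π σ : ℕ) : ℝ≥0∞) / (n : ℝ≥0∞)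

/-- The Bhattacharyya coefficient `B(P, Q) = ∫ √(f g) dμ`, computed with respect to
the dominating measure `P + Q`. -/
def bhat (P Q : Measure ℝ) : ℝ :=
  ∫ x, Real.sqrt ((P.rnDeriv (P + Q) x).toReal * (Q.rnDeriv (P + Q) x).toReal) ∂(P + Q)

/-- `α = -2 log B(P, Q)`, the Rényi divergence of order 1/2. -/
def alphaDiv (P Q : Measure ℝ) : ℝ := -(2 * Real.log (bhat P Q))

/-- The log-likelihood ratio `log (dP/dQ)` as a real-valued function. -/
def llrR (P Q : Measure ℝ) (x : ℝ) : ℝ := Real.log ((P.rnDeriv Q x).toReal)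

/-- The Kullback-Leibler divergence `D(P‖Q) = ∫ log (dP/dQ) dP`. -/
def klDiv' (P Q : Measure ℝ) : ℝ := ∫ x, llrR P Q x ∂P

/-- `τ_red`, the median of `log(dP/dQ)` under `P`. -/
def tauRed (P Q : Measure ℝ) : ℝ :=
  sInf {x : ℝ | 1 / 2 ≤ (P {y | llrR P Q y ≤ x}).toReal}

/-- The log-likelihood ratio `log(dP/dQ)` as an extended-real-valued function,
taking the value `⊥ = -∞` where the density `dP/dQ` vanishes. -/
def llrE (P Q : Measure ℝ) (x : ℝ) : EReal :=
  if P.rnDeriv Q x = 0 then (⊥ : EReal) else ((Real.log ((P.rnDeriv Q x).toReal) : ℝ) : EReal)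

/-!  ### The (sparse) planted matching observation model.
The observation alphabet is `Unit ⊕ ℝ`: the symbol `⋆ = Sum.inl ()` signifies a
non-edge, and `Sum.inr x` an edge of weight `x`. -/

/-- The distribution `Q' = (1 - d/n) δ_⋆ + (d/n) Q` of the observation on an
unplanted pair. -/
def Qprime (n : ℕ) (d : ℝ) (Q : Measure ℝ) : Measure (Unit ⊕ ℝ) :=
  ENNReal.ofReal (1 - d / n) • Measure.dirac (Sum.inl () : Unit ⊕ ℝ) +
    ENNReal.ofReal (d / n) • Q.map Sum.inr

/-- Law of the observation on the pair `e`, given that the planted matching is `π`. -/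
def edgeLaw (n : ℕ) (d : ℝ) (P Q : Measure ℝ) (π : Equiv.Perm (Fin n))
    (e : Fin n × Fin n) : Measure (Unit ⊕ ℝ) :=
  if e.2 = π e.1 then P.map Sum.inr else Qprime n d Q

/-- Conditional law of the whole observation `W`, given the planted matching `π`:
all pairs are independent. -/
def weightLaw (n : ℕ) (d : ℝ) (P Q : Measure ℝ) (π : Equiv.Perm (Fin n)) :
    Measure (Fin n × Fin n → Unit ⊕ ℝ) :=
  Measure.pi fun e => edgeLaw n d P Q π e

/-- Joint law of `(M*, W)` in the planted matching model: `M*` is uniform over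
perfect matchings and, conditionally on `M*`, the observations are as in `weightLaw`. -/
def jointLaw (n : ℕ) (d : ℝ) (P Q : Measure ℝ) :
    Measure (Equiv.Perm (Fin n) × (Fin n × Fin n → Unit ⊕ ℝ)) :=
  ((Fintype.card (Equiv.Perm (Fin n)) : ℝ≥0∞))⁻¹ •
    ∑ π : Equiv.Perm (Fin n), (Measure.dirac π).prod (weightLaw n d P Q π)

/-- A reference measure on the observation alphabet dominating both `P.map Sum.inr`
and `Q'`. -/
def refMeasure (n : ℕ) (d : ℝ) (P Q : Measure ℝ) : Measure (Unit ⊕ ℝ) :=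
  P.map Sum.inr + Qprime n d Q

/-- The likelihood of the matching `π` given the observation `w` (density of the
conditional law of `W` given `M* = π` with respect to the product reference measure);
a maximizer of this over `π` is a maximum likelihood estimator. -/
def likelihood (n : ℕ) (d : ℝ) (P Q : Measure ℝ) (π : Equiv.Perm (Fin n))
    (w : Fin n × Fin n → Unit ⊕ ℝ) : ℝ≥0∞ :=
  ∏ e : Fin n × Fin n, (edgeLaw n d P Q π e).rnDeriv (refMeasure n d P Q) (w e)

/-- The likelihood ratio `dP/dQ'` on the observation alphabet. -/
def lrO (n : ℕ) (d : ℝ) (P Q : Measure ℝ) : (Unit ⊕ ℝ) → ℝ≥0∞ :=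
  (P.map Sum.inr).rnDeriv (Qprime n d Q)

open Classical in
/-- Sum of `f` over the elements of a finite type satisfying `P`. -/
def sumOver {α : Type*} [Fintype α] (P : α → Prop) (f : α → ℝ≥0∞) : ℝ≥0∞ :=
  ∑ a : α, if P a then f a else 0

open Classical in
/-- Number of elements of a finite type satisfying `P`. -/
def countP {α : Type*} [Fintype α] (P : α → Prop) : ℕ :=
  (Finset.univ.filter P).card

open Classical in
/-- Number of elements of `s` satisfying `P`. -/
def countIn {α : Type*} (s : Finset α) (P : α → Prop) : ℕ :=
  (s.filter P).card

/-- `exp (Δ(m)) = μ_W(m) / μ_W(m*)`, the posterior mass of the matching `m` relative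
to that of the planted matching `m*` (`Δ(m)` is the excess log-likelihood of `m`;
the value `Δ(m) = -∞` corresponds to a vanishing ratio). -/
def postRatio (n : ℕ) (d : ℝ) (P Q : Measure ℝ) (mstar m : Equiv.Perm (Fin n))
    (w : Fin n × Fin n → Unit ⊕ ℝ) : ℝ≥0∞ :=
  (∏ i ∈ Finset.univ.filter fun i => m i ≠ mstar i, lrO n d P Q (w (i, m i))) *
    (∏ i ∈ Finset.univ.filter fun i => m i ≠ mstar i, lrO n d P Q (w (i, mstar i)))⁻¹

/-! ### The dense model (complete graph, real-valued weights). -/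

/-- Law of the weight of the edge `e`, given planted matching `π`, in the dense model. -/
def edgeLawD {n : ℕ} (P Q : Measure ℝ) (π : Equiv.Perm (Fin n)) (e : Fin n × Fin n) :
    Measure ℝ :=
  if e.2 = π e.1 then P else Q

/-- Conditional law of all weights given the planted matching, dense model. -/
def condLawD (n : ℕ) (P Q : Measure ℝ) (π : Equiv.Perm (Fin n)) :
    Measure (Fin n × Fin n → ℝ) :=
  Measure.pi fun e => edgeLawD P Q π e

/-- Joint law of `(M*, W)` in the dense model. -/
def jointLawD (n : ℕ) (P Q : Measure ℝ) :
    Measure (Equiv.Perm (Fin n) × (Fin n × Fin n → ℝ)) :=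
  ((Fintype.card (Equiv.Perm (Fin n)) : ℝ≥0∞))⁻¹ •
    ∑ π : Equiv.Perm (Fin n), (Measure.dirac π).prod (condLawD n P Q π)

/-- Likelihood of the matching `π` given the weights `w` in the dense model
(densities taken with respect to the dominating measure `P + Q`). -/
def likelihoodD (n : ℕ) (P Q : Measure ℝ) (π : Equiv.Perm (Fin n))
    (w : Fin n × Fin n → ℝ) : ℝ≥0∞ :=
  ∏ e : Fin n × Fin n, (edgeLawD P Q π e).rnDeriv (P + Q) (w e)

/-! ### The exponential model. -/

/-- The exponential distribution with rate `r`. -/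
def expMeasure (r : ℝ) : Measure ℝ :=
  volume.withDensity fun x => ENNReal.ofReal (if 0 ≤ x then r * Real.exp (-(r * x)) else 0)

/-- Conditional law of the weights given the planted matching `mstar` in the exponential
model: planted edges carry `Exp(λ)` weights, the others `Exp(1/n)` weights. -/
def condLawE (n : ℕ) (lam : ℝ) (mstar : Equiv.Perm (Fin n)) :
    Measure (Fin n × Fin n → ℝ) :=
  Measure.pi fun e => if e.2 = mstar e.1 then expMeasure lam else expMeasure (1 / n)

/-- Joint law of `(M*, W)` in the exponential model. -/
def jointLawE (n : ℕ) (lam : ℝ) :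
    Measure (Equiv.Perm (Fin n) × (Fin n × Fin n → ℝ)) :=
  ((Fintype.card (Equiv.Perm (Fin n)) : ℝ≥0∞))⁻¹ •
    ∑ π : Equiv.Perm (Fin n), (Measure.dirac π).prod (condLawE n lam π)

/-- Likelihood ratio of `Exp(λ)` versus `Exp(1/n)`. -/
def lrE (n : ℕ) (lam : ℝ) : ℝ → ℝ≥0∞ :=
  (expMeasure lam).rnDeriv (expMeasure (1 / n))

/-- `exp (Δ(m))` in the exponential model. -/
def postRatioE (n : ℕ) (lam : ℝ) (mstar m : Equiv.Perm (Fin n))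
    (w : Fin n × Fin n → ℝ) : ℝ≥0∞ :=
  (∏ i ∈ Finset.univ.filter fun i => m i ≠ mstar i, lrE n lam (w (i, m i))) *
    (∏ i ∈ Finset.univ.filter fun i => m i ≠ mstar i, lrE n lam (w (i, mstar i)))⁻¹

/-- The explicit log-likelihood ratio `log(p/q)(w) = log (n λ) - (λ - 1/n) w` in the
exponential model. -/
def llrExp (n : ℕ) (lam x : ℝ) : ℝ := Real.log (n * lam) - (lam - 1 / n) * x

/-! ### Unweighted random graphs. -/

/-- The Bernoulli distribution on `Bool` with success probability `p`. -/
def bernoulliBool (p : ℝ) : Measure Bool :=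
  ENNReal.ofReal (1 - p) • Measure.dirac false + ENNReal.ofReal p • Measure.dirac true

/-- Bipartite Erdős–Rényi graph on `[n] × [n]'` with edge probability `p`;
`ω (i, j) = true` iff there is a (blue) edge between left vertex `i` and right
vertex `j'`. -/
def erGraph (n : ℕ) (p : ℝ) : Measure (Fin n × Fin n → Bool) :=
  Measure.pi fun _ => bernoulliBool p

/-- Joint law of `(M*, G)` in the unweighted planted matching model. -/
def jointLawU (n : ℕ) (d : ℝ) :
    Measure (Equiv.Perm (Fin n) × (Fin n × Fin n → Bool)) :=
  ((Fintype.card (Equiv.Perm (Fin n)) : ℝ≥0∞))⁻¹ •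
    ∑ π : Equiv.Perm (Fin n), (Measure.dirac π).prod
      (Measure.pi fun e => if e.2 = π e.1 then Measure.dirac true else bernoulliBool (d / n))

/-! ### The sprinkling construction. -/

open Classical in
/-- `A_k' = {v' ∈ (V*)' : v' has a blue-edge neighbor in L_k}` (right vertices are
identified with left vertices via the planted matching). -/
def AsetS {n : ℕ} (Vstar : Finset (Fin n)) (L : Fin n → Finset (Fin n))
    (ω : Fin n × Fin n → Bool) (k : Fin n) : Finset (Fin n) :=
  Vstar.filter fun v => ∃ u ∈ L k, ω (u, v) = true

open Classical in
/-- `B_k = {v ∈ V* : v has a blue-edge neighbor in R_k}`. -/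
def BsetS {n : ℕ} (Vstar : Finset (Fin n)) (R : Fin n → Finset (Fin n))
    (ω : Fin n × Fin n → Bool) (k : Fin n) : Finset (Fin n) :=
  Vstar.filter fun v => ∃ u ∈ R k, ω (v, u) = true

open Classical in
/-- `d_v = Σ_k 1{v' ∈ A_k'} + Σ_k 1{v ∈ B_k}`. -/
def dvalS {n : ℕ} (Vstar K1 : Finset (Fin n)) (L R : Fin n → Finset (Fin n))
    (ω : Fin n × Fin n → Bool) (v : Fin n) : ℕ :=
  (K1.filter fun k => v ∈ AsetS Vstar L ω k).card +
    (K1.filter fun k => v ∈ BsetS Vstar R ω k).card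

open Classical in
/-- `A_overlap = {v ∈ V* : d_v ≥ 2}`. -/
def AoverlapS {n : ℕ} (Vstar K1 : Finset (Fin n)) (L R : Fin n → Finset (Fin n))
    (ω : Fin n × Fin n → Bool) : Finset (Fin n) :=
  Vstar.filter fun v => 2 ≤ dvalS Vstar K1 L R ω v

/-- `U_k' = A_k' ∖ A_overlap'`. -/
def UsetS {n : ℕ} (Vstar K1 : Finset (Fin n)) (L R : Fin n → Finset (Fin n))
    (ω : Fin n × Fin n → Bool) (k : Fin n) : Finset (Fin n) :=
  AsetS Vstar L ω k \ AoverlapS Vstar K1 L R ω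

/-- `V_k = B_k ∖ A_overlap`. -/
def VsetS {n : ℕ} (Vstar K1 : Finset (Fin n)) (L R : Fin n → Finset (Fin n))
    (ω : Fin n × Fin n → Bool) (k : Fin n) : Finset (Fin n) :=
  BsetS Vstar R ω k \ AoverlapS Vstar K1 L R ω

open Classical in
/-- `𝒦₂ = {k ∈ 𝒦₁ : |U_k'| ≥ b and |V_k| ≥ b}`. -/
def K2S {n : ℕ} (Vstar K1 : Finset (Fin n)) (L R : Fin n → Finset (Fin n))
    (ω : Fin n × Fin n → Bool) (b : ℝ) : Finset (Fin n) :=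
  K1.filter fun k =>
    b ≤ ((UsetS Vstar K1 L R ω k).card : ℝ) ∧ b ≤ ((VsetS Vstar K1 L R ω k).card : ℝ)

/-- Blue adjacency of the super graph: `i` and `j'` are joined iff some blue edge of
`G₂` connects `U_i` and `V_j'`. -/
def BlS {n : ℕ} (Vstar K1 : Finset (Fin n)) (L R : Fin n → Finset (Fin n))
    (ω : Fin n × Fin n → Bool) (i j : Fin n) : Prop :=
  ∃ u ∈ UsetS Vstar K1 L R ω i, ∃ v ∈ VsetS Vstar K1 L R ω j, ω (u, v) = true

/-- `E` is the blue-edge set of an alternating cycle of length `≥ minLen` (the length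
is the number of edges, `2r` for a cycle through `r` red edges), with vertices in `S`,
in the bi-colored bipartite graph whose red edges are `{(k, k') : k ∈ S}` and whose
blue adjacency is `Bl`. -/
def IsAltCycleEdges {n : ℕ} (S : Finset (Fin n)) (Bl : Fin n → Fin n → Prop)
    (minLen : ℝ) (E : Finset (Fin n × Fin n)) : Prop :=
  ∃ (r : ℕ) (_ : NeZero r) (c : ZMod r → Fin n),
    Function.Injective c ∧ (∀ t, c t ∈ S) ∧ (∀ t : ZMod r, Bl (c (t + 1)) (c t)) ∧
      minLen ≤ (2 * r : ℝ) ∧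
      E = Finset.image (fun t : ZMod r => (c (t + 1), c t)) Finset.univ

/-! ### Alternating paths in the exponential model.
A `(2ℓ-1)`-alternating path (relative to the planted matching `mstar`) is encoded by an
injective map `p : Fin ℓ → Fin n`: its red edges are `(p k, (p k)')` and its blue
edges are `(p (k+1), (p k)')`, where `i' = mstar i`. -/

/-- Total red weight `wt_r(P)` of the path encoded by `p`. -/
def pwtR {n ℓ : ℕ} (mstar : Equiv.Perm (Fin n)) (w : Fin n × Fin n → ℝ)
    (p : Fin ℓ → Fin n) : ℝ :=
  ∑ k : Fin ℓ, w (p k, mstar (p k))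

/-- Sum of the first `m` red weights of the path. -/
def pwtRpartial {n ℓ : ℕ} (mstar : Equiv.Perm (Fin n)) (w : Fin n × Fin n → ℝ)
    (p : Fin ℓ → Fin n) (m : ℕ) : ℝ :=
  ∑ k : Fin ℓ, if (k : ℕ) < m then w (p k, mstar (p k)) else 0

/-- Total blue weight `wt_b(P)` of the path encoded by `p`. -/
def pwtB {n ℓ : ℕ} (mstar : Equiv.Perm (Fin n)) (w : Fin n × Fin n → ℝ)
    (p : Fin ℓ → Fin n) : ℝ :=
  ∑ k : Fin ℓ, ∑ k' : Fin ℓ,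
    if (k' : ℕ) = (k : ℕ) + 1 then w (p k', mstar (p k)) else 0

/-- Sum of the first `m` blue weights of the path. -/
def pwtBpartial {n ℓ : ℕ} (mstar : Equiv.Perm (Fin n)) (w : Fin n × Fin n → ℝ)
    (p : Fin ℓ → Fin n) (m : ℕ) : ℝ :=
  ∑ k : Fin ℓ, ∑ k' : Fin ℓ,
    if (k' : ℕ) = (k : ℕ) + 1 ∧ (k : ℕ) < m then w (p k', mstar (p k)) else 0

/-- The path is `(a, b, η)`-light: `|wt_r(P) - aℓ| ≤ η/2` and `|wt_b(P) - b(ℓ-1)| ≤ η/2`. -/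
def IsLight {n ℓ : ℕ} (mstar : Equiv.Perm (Fin n)) (w : Fin n × Fin n → ℝ)
    (p : Fin ℓ → Fin n) (a b η : ℝ) : Prop :=
  |pwtR mstar w p - a * ℓ| ≤ η / 2 ∧ |pwtB mstar w p - b * ((ℓ : ℝ) - 1)| ≤ η / 2

/-- The path is `A`-uniform: `dev_r(P) ≤ A` and `dev_b(P) ≤ A`. -/
def IsUniform {n ℓ : ℕ} (mstar : Equiv.Perm (Fin n)) (w : Fin n × Fin n → ℝ)
    (p : Fin ℓ → Fin n) (A : ℝ) : Prop :=
  (∀ m : ℕ, 1 ≤ m → m ≤ ℓ →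
      |pwtRpartial mstar w p m * ℓ / pwtR mstar w p - m| ≤ A) ∧
  (∀ m : ℕ, 1 ≤ m → m ≤ ℓ - 1 →
      |pwtBpartial mstar w p m * ((ℓ : ℝ) - 1) / pwtB mstar w p - m| ≤ A)

/-- `|S|`: the number of `(2ℓ-1)`-alternating paths that are `(a,b,η)`-light and
`A`-uniform. -/
def countS (n ℓ : ℕ) (mstar : Equiv.Perm (Fin n)) (a b η A : ℝ)
    (w : Fin n × Fin n → ℝ) : ℕ :=
  countP fun p : Fin ℓ → Fin n =>
    Function.Injective p ∧ IsLight mstar w p a b η ∧ IsUniform mstar w p A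

end PlantedMatching


namespace PlantedMatching

/-! ### Auxiliary lemmas for Statement 8. -/

lemma aux_prod_inv_le {ι : Type*} (s : Finset ι) (f : ι → ℝ≥0∞) (h : ∀ i ∈ s, f i ≠ ∞) :
    (∏ i ∈ s, f i)⁻¹ ≤ ∏ i ∈ s, (f i)⁻¹ := by
  classical
  induction s using Finset.induction with
  | empty => simp
  | insert _ _ hi ih =>
    rename_i a s'
    rw [Finset.prod_insert hi, Finset.prod_insert hi]
    have ha : f a ≠ ∞ := h a (Finset.mem_insert_self a s')
    have h' : ∀ i ∈ s', f i ≠ ∞ := fun i hi' => h i (Finset.mem_insert_of_mem hi')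
    have hprod : ∏ i ∈ s', f i ≠ ∞ :=
      (ENNReal.prod_lt_top (fun i hi' => lt_top_iff_ne_top.2 (h' i hi'))).ne
    rw [ENNReal.mul_inv (Or.inr hprod) (Or.inl ha)]
    exact mul_le_mul_right (ih h') _

lemma aux_prod_rpow {ι : Type*} (s : Finset ι) (f : ι → ℝ≥0∞) {σ : ℝ} (hσ : 0 ≤ σ) :
    (∏ i ∈ s, f i) ^ σ = ∏ i ∈ s, (f i) ^ σ := by
  classical
  induction s using Finset.induction with
  | empty => simp [ENNReal.one_rpow]
  | insert _ _ hi ih =>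
    rename_i a s'
    rw [Finset.prod_insert hi, Finset.prod_insert hi, ENNReal.mul_rpow_of_nonneg _ _ hσ, ih]

lemma aux_sq_half_le (x : ℝ≥0∞) : x * (x ^ (1/2 : ℝ))⁻¹ ≤ x ^ (1/2 : ℝ) := by
  rcases eq_or_ne x 0 with rfl | hx0
  · simp
  rcases eq_or_ne x ∞ with rfl | hxt
  · simp [ENNReal.top_rpow_of_pos (by norm_num : (0:ℝ) < 1/2)]
  have hxx : x = x ^ (1/2:ℝ) * x ^ (1/2:ℝ) := by
    rw [← ENNReal.rpow_add _ _ hx0 hxt]; norm_num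
  refine le_of_eq ?_
  calc x * (x ^ (1/2 : ℝ))⁻¹ = x ^ (1/2:ℝ) * x ^ (1/2:ℝ) * (x ^ (1/2 : ℝ))⁻¹ := by rw [← hxx]
  _ = x ^ (1/2:ℝ) := by
      rw [mul_assoc, ENNReal.mul_inv_cancel, mul_one]
      · simp [ENNReal.rpow_eq_zero_iff, hx0, hxt]
      · simp [ENNReal.rpow_eq_top_iff, hx0, hxt]

lemma aux_lintegral_pi_prod {ι : Type*} [Fintype ι] [DecidableEq ι] {α : ι → Type*}
    [∀ i, MeasurableSpace (α i)] (μ : ∀ i, Measure (α i)) [∀ i, SigmaFinite (μ i)]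
    (f : ∀ i, α i → ℝ≥0∞) (hf : ∀ i, Measurable (f i)) :
    ∫⁻ x, ∏ i, f i (x i) ∂Measure.pi μ = ∏ i, ∫⁻ y, f i y ∂μ i := by
  have hF : Measurable fun x : ∀ i, α i => ∏ i, f i (x i) :=
    Finset.measurable_prod _ fun i _ => (hf i).comp (measurable_pi_apply i)
  have key : ∀ s : Finset ι, ∀ x : ∀ i, α i,
      (∫⋯∫⁻_s, (fun x => ∏ i, f i (x i)) ∂μ) x
        = (∏ i ∈ s, ∫⁻ y, f i y ∂μ i) * ∏ i ∈ sᶜ, f i (x i) := by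
    intro s
    induction s using Finset.induction with
    | empty => intro x; simp [MeasureTheory.lmarginal_empty]
    | @insert j s' hj ih =>
      intro x
      rw [MeasureTheory.lmarginal_insert _ hF hj]
      have hjc : j ∈ s'ᶜ := by simpa using hj
      calc ∫⁻ xj, (∫⋯∫⁻_s', (fun x => ∏ i, f i (x i)) ∂μ) (Function.update x j xj) ∂μ j
          = ∫⁻ xj, (∏ i ∈ s', ∫⁻ y, f i y ∂μ i) *
              ∏ i ∈ s'ᶜ, f i (Function.update x j xj i) ∂μ j := by
            simp_rw [ih]
        _ = ∫⁻ xj, (∏ i ∈ s', ∫⁻ y, f i y ∂μ i) *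
              (f j xj * ∏ i ∈ s'ᶜ.erase j, f i (x i)) ∂μ j := by
            congr 1; ext xj; congr 1
            rw [← Finset.prod_erase_mul _ _ hjc]
            rw [Function.update_self]
            rw [mul_comm]
            congr 1
            exact Finset.prod_congr rfl fun i hi =>
              by rw [Function.update_of_ne (Finset.ne_of_mem_erase hi)]
        _ = (∏ i ∈ insert j s', ∫⁻ y, f i y ∂μ i) * ∏ i ∈ (insert j s')ᶜ, f i (x i) := by
            rw [lintegral_const_mul _ ((hf j).mul_const _), lintegral_mul_const _ (hf j)]
            rw [Finset.prod_insert hj, Finset.compl_insert]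
            ring
  rcases isEmpty_or_nonempty (∀ i, α i) with h | hne
  · obtain ⟨i, hi⟩ : ∃ i, IsEmpty (α i) := by
      by_contra hc
      push_neg at hc
      exact h.false (Classical.nonempty_pi.mpr hc).some
    have hμ : μ i = 0 := (μ i).eq_zero_of_isEmpty
    rw [lintegral_of_isEmpty]
    rw [Finset.prod_eq_zero (Finset.mem_univ i)]
    simp [hμ]
  · obtain ⟨x⟩ := hne
    rw [MeasureTheory.lintegral_eq_lmarginal_univ x, key Finset.univ x]
    simp

lemma bhat_nonneg (P Q : Measure ℝ) : 0 ≤ bhat P Q :=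
  integral_nonneg fun _ => Real.sqrt_nonneg _

lemma aux_sqrt_mul_le_add (a b : ℝ) (ha : 0 ≤ a) (hb : 0 ≤ b) :
    Real.sqrt (a * b) ≤ (a + b) / 2 := by
  rw [show (a+b)/2 = Real.sqrt (((a+b)/2)^2) by rw [Real.sqrt_sq (by linarith)]]
  apply Real.sqrt_le_sqrt
  nlinarith [sq_nonneg (a - b)]

lemma aux_mul_self_rpow_half (a : ℝ≥0∞) : (a * a) ^ (1/2 : ℝ) = a := by
  rw [← sq, ← ENNReal.rpow_natCast a 2, ← ENNReal.rpow_mul]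
  norm_num

lemma hellinger_bound (P Q : Measure ℝ) [IsFiniteMeasure P] [IsFiniteMeasure Q]
    (h : ℝ → ℝ≥0∞) (hmeas : Measurable h) (hPQ : Q.withDensity h = P) :
    ∫⁻ x, (h x) ^ (1/2 : ℝ) ∂Q ≤ ENNReal.ofReal (bhat P Q) := by
  set ν : Measure ℝ := P + Q with hν
  set p : ℝ → ℝ≥0∞ := P.rnDeriv ν with hp
  set q : ℝ → ℝ≥0∞ := Q.rnDeriv ν with hq
  have hQν : Q ≪ ν := Measure.absolutelyContinuous_of_le (Measure.le_add_left le_rfl)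
  have hQq : ν.withDensity q = Q := Measure.withDensity_rnDeriv_eq Q ν hQν
  have hqh : ν.withDensity (q * h) = P := by
    have h2 := withDensity_mul ν (Measure.measurable_rnDeriv Q ν) hmeas
    rw [← hq, hQq, hPQ] at h2
    exact h2
  have hpq : p =ᵐ[ν] q * h := by
    rw [hp, ← hqh]
    exact Measure.rnDeriv_withDensity ν ((Measure.measurable_rnDeriv _ _).mul hmeas)
  have hqfin : ∀ᵐ x ∂ν, q x < ∞ := Measure.rnDeriv_lt_top Q ν
  have hpfin : ∀ᵐ x ∂ν, p x < ∞ := Measure.rnDeriv_lt_top P ν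
  have step1 : ∫⁻ x, (h x) ^ (1/2 : ℝ) ∂Q = ∫⁻ x, q x * (h x) ^ (1/2 : ℝ) ∂ν := by
    rw [← hQq, lintegral_withDensity_eq_lintegral_mul _ (Measure.measurable_rnDeriv _ _)
      (hmeas.pow_const _)]
    rfl
  have step2 : ∫⁻ x, q x * (h x) ^ (1/2 : ℝ) ∂ν = ∫⁻ x, (p x * q x) ^ (1/2 : ℝ) ∂ν := by
    refine lintegral_congr_ae ?_
    filter_upwards [hpq, hqfin] with x hx hxq
    replace hx : p x = q x * h x := hx
    rcases eq_or_ne (q x) 0 with h0 | h0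
    · simp [h0, hx]
    · rw [hx, show q x * h x * q x = (q x * q x) * h x from by ring,
        ENNReal.mul_rpow_of_nonneg _ _ (by norm_num : (0:ℝ) ≤ 1/2), aux_mul_self_rpow_half]
  have step3 : ∫⁻ x, (p x * q x) ^ (1/2 : ℝ) ∂ν
      = ∫⁻ x, ENNReal.ofReal (Real.sqrt ((p x).toReal * (q x).toReal)) ∂ν := by
    refine lintegral_congr_ae ?_
    filter_upwards [hpfin, hqfin] with x hxp hxq
    rw [Real.sqrt_eq_rpow, ← ENNReal.toReal_mul,
      ← ENNReal.ofReal_rpow_of_nonneg ENNReal.toReal_nonneg (by norm_num : (0:ℝ) ≤ 1/2),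
      ENNReal.ofReal_toReal (by finiteness)]
  have hint : Integrable (fun x => Real.sqrt ((p x).toReal * (q x).toReal)) ν := by
    have hg : Integrable (fun x => ((p x).toReal + (q x).toReal) / 2) ν :=
      ((Measure.integrable_toReal_rnDeriv).add (Measure.integrable_toReal_rnDeriv)).div_const 2
    refine hg.mono' ?_ ?_
    · exact (((Measure.measurable_rnDeriv P ν).ennreal_toReal.mul
        (Measure.measurable_rnDeriv Q ν).ennreal_toReal).sqrt).aestronglyMeasurable
    · filter_upwards with x
      rw [Real.norm_of_nonneg (Real.sqrt_nonneg _)]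
      exact aux_sqrt_mul_le_add _ _ ENNReal.toReal_nonneg ENNReal.toReal_nonneg
  have step4 : ∫⁻ x, ENNReal.ofReal (Real.sqrt ((p x).toReal * (q x).toReal)) ∂ν
      = ENNReal.ofReal (bhat P Q) := by
    rw [← ofReal_integral_eq_lintegral_ofReal hint
      (Filter.Eventually.of_forall fun x => Real.sqrt_nonneg _)]
    rfl
  rw [step1, step2, step3, step4]

lemma measEmb_inr : MeasurableEmbedding (Sum.inr : ℝ → Unit ⊕ ℝ) :=
  ⟨Sum.inr_injective, measurable_inr, fun _ hs => measurableSet_inr_image.2 hs⟩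

instance : MeasurableSingletonClass (Unit ⊕ ℝ) := ⟨by
  rintro (u | x)
  · rw [show ({Sum.inl u} : Set (Unit ⊕ ℝ)) = Sum.inl '' {u} by simp]
    exact measurableSet_inl_image.2 (measurableSet_singleton u)
  · rw [show ({Sum.inr x} : Set (Unit ⊕ ℝ)) = Sum.inr '' {x} by simp]
    exact measurableSet_inr_image.2 (measurableSet_singleton x)⟩

variable {n : ℕ} {d : ℝ} {P Q : Measure ℝ}

lemma qprime_isProb (hQ : IsProbabilityMeasure Q) (hd0 : 0 ≤ d) (hdn : d ≤ n) :
    IsProbabilityMeasure (Qprime n d Q) := by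
  have hdiv0 : 0 ≤ d / n := by positivity
  have hdiv1 : d / n ≤ 1 := by
    rcases Nat.eq_zero_or_pos n with h | h
    · have : d = 0 := le_antisymm (by simpa [h] using hdn) hd0
      simp [this]
    · rw [div_le_one (by exact_mod_cast h)]
      exact hdn
  constructor
  have : IsProbabilityMeasure (Q.map Sum.inr) :=
    Measure.isProbabilityMeasure_map (f := (Sum.inr : ℝ → Unit ⊕ ℝ)) measurable_inr.aemeasurable
  simp only [Qprime, Measure.add_apply, Measure.smul_apply, smul_eq_mul,
    Measure.dirac_apply_of_mem (Set.mem_univ _), measure_univ, mul_one]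
  rw [← ENNReal.ofReal_add (by linarith) hdiv0]
  norm_num

lemma P_eq_withDensity (hP : IsProbabilityMeasure P) (hQ : IsProbabilityMeasure Q)
    (habs : P.map Sum.inr ≪ Qprime n d Q) :
    Q.withDensity (fun x => ENNReal.ofReal (d / n) * lrO n d P Q (Sum.inr x)) = P := by
  have hg : Measurable (lrO n d P Q) := Measure.measurable_rnDeriv _ _
  haveI : IsFiniteMeasure (Qprime n d Q) := by
    constructor
    simp only [Qprime, Measure.add_apply, Measure.smul_apply, smul_eq_mul]
    exact ENNReal.add_lt_top.2 ⟨ENNReal.mul_lt_top ENNReal.ofReal_lt_top (measure_lt_top _ _),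
      ENNReal.mul_lt_top ENNReal.ofReal_lt_top (measure_lt_top _ _)⟩
  ext A hA
  rw [withDensity_apply _ hA]
  have himg : MeasurableSet ((Sum.inr : ℝ → Unit ⊕ ℝ) '' A : Set (Unit ⊕ ℝ)) :=
    measEmb_inr.measurableSet_image.2 hA
  have hPA : (P.map Sum.inr) ((Sum.inr : ℝ → Unit ⊕ ℝ) '' A) = P A := by
    rw [Measure.map_apply measurable_inr himg,
      Set.preimage_image_eq _ Sum.inr_injective]
  have hset : ∫⁻ y in (Sum.inr : ℝ → Unit ⊕ ℝ) '' A, lrO n d P Q y ∂(Qprime n d Q) = P A := by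
    simp only [lrO]
    rw [Measure.setLIntegral_rnDeriv habs, hPA]
  have hsplit : ∫⁻ y in (Sum.inr : ℝ → Unit ⊕ ℝ) '' A, lrO n d P Q y ∂(Qprime n d Q)
      = ENNReal.ofReal (d / n) * ∫⁻ x in A, lrO n d P Q (Sum.inr x) ∂Q := by
    rw [Qprime, Measure.restrict_add, lintegral_add_measure, Measure.restrict_smul,
      Measure.restrict_smul, lintegral_smul_measure, lintegral_smul_measure]
    have h1 : Measure.dirac (Sum.inl () : Unit ⊕ ℝ) ((Sum.inr : ℝ → Unit ⊕ ℝ) '' A) = 0 := by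
      rw [Measure.dirac_apply' _ himg]
      simp
    rw [Measure.restrict_eq_zero.2 h1]
    simp only [lintegral_zero_measure, mul_zero, zero_add, smul_zero, smul_eq_mul]
    congr 1
    rw [Measure.restrict_map measurable_inr himg, measEmb_inr.lintegral_map,
      Set.preimage_image_eq _ Sum.inr_injective]
  rw [← hset, hsplit]
  exact lintegral_const_mul _
    (show Measurable fun x => lrO n d P Q (Sum.inr x) from hg.comp measurable_inr)

lemma qprime_finite (hQ : IsProbabilityMeasure Q) : IsFiniteMeasure (Qprime n d Q) := by
  haveI := hQ
  constructor
  simp only [Qprime, Measure.add_apply, Measure.smul_apply, smul_eq_mul]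
  exact ENNReal.add_lt_top.2 ⟨ENNReal.mul_lt_top ENNReal.ofReal_lt_top (measure_lt_top _ _),
    ENNReal.mul_lt_top ENNReal.ofReal_lt_top (measure_lt_top _ _)⟩

lemma factor_unplanted_le (hP : IsProbabilityMeasure P) (hQ : IsProbabilityMeasure Q)
    (hd : 0 < d) (hdn : d ≤ n) (habs : P.map Sum.inr ≪ Qprime n d Q) :
    ∫⁻ y, (lrO n d P Q y) ^ (1/2 : ℝ) ∂(Qprime n d Q)
      ≤ ENNReal.ofReal (Real.sqrt (d / n) * bhat P Q) := by
  haveI := qprime_finite (n := n) (d := d) hQ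
  have hn : 0 < (n : ℝ) := by
    rcases Nat.eq_zero_or_pos n with h | h
    · exfalso; rw [h] at hdn; push_cast at hdn; linarith
    · exact_mod_cast h
  have hdn' : 0 < d / n := by positivity
  set g : (Unit ⊕ ℝ) → ℝ≥0∞ := lrO n d P Q with hgdef
  have hg : Measurable g := Measure.measurable_rnDeriv _ _
  have hf : Measurable fun y => g y ^ (1/2 : ℝ) := hg.pow_const _
  set c₁ : ℝ≥0∞ := ENNReal.ofReal (1 - d / n) with hc₁
  set c₂ : ℝ≥0∞ := ENNReal.ofReal (d / n) with hc₂
  have hc₂0 : c₂ ≠ 0 := by simp [hc₂, hdn']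
  have hc₂t : c₂ ≠ ∞ := ENNReal.ofReal_ne_top
  have hsplit : ∫⁻ y, g y ^ (1/2 : ℝ) ∂(Qprime n d Q)
      = c₁ * (g (Sum.inl ()) ^ (1/2 : ℝ)) + c₂ * ∫⁻ x, g (Sum.inr x) ^ (1/2 : ℝ) ∂Q := by
    rw [Qprime, lintegral_add_measure, lintegral_smul_measure, lintegral_smul_measure,
      lintegral_dirac' _ hf, lintegral_map hf measurable_inr, smul_eq_mul, smul_eq_mul]
  have hterm1 : c₁ * (g (Sum.inl ()) ^ (1/2 : ℝ)) = 0 := by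
    rcases eq_or_ne c₁ 0 with h0 | h0
    · rw [h0, zero_mul]
    · have hQs : Qprime n d Q {Sum.inl ()} = c₁ := by
        simp only [Qprime, Measure.add_apply, Measure.smul_apply, smul_eq_mul]
        rw [Measure.dirac_apply_of_mem (Set.mem_singleton _),
          Measure.map_apply measurable_inr (measurableSet_singleton _)]
        have : (Sum.inr : ℝ → Unit ⊕ ℝ) ⁻¹' {Sum.inl ()} = ∅ := by
          ext x; simp
        rw [this]
        simp [hc₁]
      have h1 : g (Sum.inl ()) * Qprime n d Q {Sum.inl ()} = 0 := by
        rw [← lintegral_singleton' hg]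
        simp only [hgdef, lrO]
        rw [Measure.setLIntegral_rnDeriv habs,
          Measure.map_apply measurable_inr (measurableSet_singleton _)]
        have : (Sum.inr : ℝ → Unit ⊕ ℝ) ⁻¹' {Sum.inl ()} = ∅ := by ext x; simp
        rw [this]; simp
      rw [hQs] at h1
      have hg0 : g (Sum.inl ()) = 0 := by
        rcases mul_eq_zero.1 h1 with h | h
        · exact h
        · exact absurd h h0
      rw [hg0, ENNReal.zero_rpow_of_pos (by norm_num : (0:ℝ) < 1/2), mul_zero]
  set h : ℝ → ℝ≥0∞ := fun x => c₂ * g (Sum.inr x) with hhdef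
  have hwd : Q.withDensity h = P := P_eq_withDensity hP hQ habs
  have hhm : Measurable h := (hg.comp measurable_inr).const_mul _
  have hgx : ∀ x, g (Sum.inr x) = c₂⁻¹ * h x := by
    intro x
    rw [hhdef]
    rw [← mul_assoc, ENNReal.inv_mul_cancel hc₂0 hc₂t, one_mul]
  have hint : ∫⁻ x, g (Sum.inr x) ^ (1/2 : ℝ) ∂Q
      = (c₂⁻¹) ^ (1/2 : ℝ) * ∫⁻ x, h x ^ (1/2 : ℝ) ∂Q := by
    rw [← lintegral_const_mul _ (hhm.pow_const _)]
    refine lintegral_congr fun x => ?_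
    rw [hgx x, ENNReal.mul_rpow_of_nonneg _ _ (by norm_num : (0:ℝ) ≤ 1/2)]
  set s : ℝ≥0∞ := ENNReal.ofReal (Real.sqrt (d / n)) with hs
  have hs0 : s ≠ 0 := by
    rw [hs, Ne, ENNReal.ofReal_eq_zero, not_le]
    exact Real.sqrt_pos.2 hdn'
  have hst : s ≠ ∞ := ENNReal.ofReal_ne_top
  have hcs : c₂ * (c₂⁻¹) ^ (1/2 : ℝ) = s := by
    have h1 : c₂ = s * s := by
      rw [hs, ← ENNReal.ofReal_mul (Real.sqrt_nonneg _), Real.mul_self_sqrt hdn'.le]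
    have h2 : (c₂⁻¹) ^ (1/2 : ℝ) = s⁻¹ := by
      rw [ENNReal.inv_rpow]
      congr 1
      rw [hc₂, ENNReal.ofReal_rpow_of_pos hdn', hs, Real.sqrt_eq_rpow]
    rw [h2, h1, mul_assoc, ENNReal.mul_inv_cancel hs0 hst, mul_one]
  calc ∫⁻ y, g y ^ (1/2 : ℝ) ∂(Qprime n d Q)
      = c₂ * ((c₂⁻¹) ^ (1/2 : ℝ) * ∫⁻ x, h x ^ (1/2 : ℝ) ∂Q) := by
        rw [hsplit, hterm1, zero_add, hint]
    _ = s * ∫⁻ x, h x ^ (1/2 : ℝ) ∂Q := by rw [← mul_assoc, hcs]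
    _ ≤ s * ENNReal.ofReal (bhat P Q) :=
        mul_le_mul_right (hellinger_bound P Q h hhm hwd) _
    _ = ENNReal.ofReal (Real.sqrt (d / n) * bhat P Q) := by
        rw [hs, ← ENNReal.ofReal_mul (Real.sqrt_nonneg _)]

lemma factor_planted_le (hP : IsProbabilityMeasure P) (hQ : IsProbabilityMeasure Q)
    (habs : P.map Sum.inr ≪ Qprime n d Q) :
    ∫⁻ y, ((lrO n d P Q y) ^ (1/2 : ℝ))⁻¹ ∂(P.map Sum.inr)
      ≤ ∫⁻ y, (lrO n d P Q y) ^ (1/2 : ℝ) ∂(Qprime n d Q) := by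
  haveI := qprime_finite (n := n) (d := d) hQ
  have hg : Measurable (lrO n d P Q) := Measure.measurable_rnDeriv _ _
  conv_lhs => rw [show P.map Sum.inr = (Qprime n d Q).withDensity (lrO n d P Q) from
    (Measure.withDensity_rnDeriv_eq _ _ habs).symm]
  rw [lintegral_withDensity_eq_lintegral_mul _ hg
    (show Measurable fun y => (lrO n d P Q y ^ (1/2 : ℝ))⁻¹ from (hg.pow_const _).inv)]
  exact lintegral_mono fun y => aux_sq_half_le _

end PlantedMatching


namespace PlantedMatching

open Classical in
/-- The per-edge factor used in the Chernoff bound for Lemma 3.3. -/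
def sqrtFactor (n : ℕ) (d : ℝ) (P Q : Measure ℝ) (mstar m : Equiv.Perm (Fin n))
    (e : Fin n × Fin n) : (Unit ⊕ ℝ) → ℝ≥0∞ :=
  if m e.1 ≠ mstar e.1 ∧ e.2 = m e.1 then fun y => (lrO n d P Q y) ^ (1/2 : ℝ)
  else if m e.1 ≠ mstar e.1 ∧ e.2 = mstar e.1 then fun y => ((lrO n d P Q y) ^ (1/2 : ℝ))⁻¹
  else fun _ => 1

lemma sqrtFactor_measurable (n : ℕ) (d : ℝ) (P Q : Measure ℝ) (mstar m : Equiv.Perm (Fin n))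
    (e : Fin n × Fin n) : Measurable (sqrtFactor n d P Q mstar m e) := by
  have hg : Measurable (lrO n d P Q) := Measure.measurable_rnDeriv _ _
  rw [sqrtFactor]
  split_ifs
  · exact hg.pow_const _
  · exact (hg.pow_const _).inv
  · exact measurable_const

end PlantedMatching

namespace PlantedMatching

/-- Lemma 3.3: if `|m △ m*| = 2ℓ`, then for `x ≥ 0`,
`P{Δ(m) ≥ xℓ | M* = m*} ≤ ((d/n) exp(-(α + x/2)))^ℓ` where `α = -2 log B(P,Q)`. -/
theorem stmt8 :
    ∀ (n : ℕ) (d : ℝ) (P Q : Measure ℝ),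
      IsProbabilityMeasure P → IsProbabilityMeasure Q →
      0 ≤ d → d ≤ n →
      P.map Sum.inr ≪ Qprime n d Q →
      ∀ (mstar m : Equiv.Perm (Fin n)) (ℓ : ℕ), hamming m mstar = ℓ →
      ∀ x : ℝ, 0 ≤ x →
        weightLaw n d P Q mstar
            {w | ENNReal.ofReal (Real.exp (x * ℓ)) ≤ postRatio n d P Q mstar m w} ≤
          ENNReal.ofReal ((d / n * Real.exp (-(alphaDiv P Q + x / 2))) ^ ℓ) := by
  intro n d P Q hP hQ hd0 hdn habs mstar m ℓ hl x hx
  haveI := hP; haveI := hQ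
  haveI hQ' : IsProbabilityMeasure (Qprime n d Q) := qprime_isProb hQ hd0 hdn
  haveI hP' : IsProbabilityMeasure (P.map Sum.inr) :=
    Measure.isProbabilityMeasure_map (f := (Sum.inr : ℝ → Unit ⊕ ℝ)) measurable_inr.aemeasurable
  have hedge : ∀ e : Fin n × Fin n, IsProbabilityMeasure (edgeLaw n d P Q mstar e) := by
    intro e
    rw [edgeLaw]
    split_ifs
    · exact hP'
    · exact hQ'
  haveI hedge' : ∀ e : Fin n × Fin n, SigmaFinite (edgeLaw n d P Q mstar e) := by
    intro e
    haveI := hedge e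
    infer_instance
  haveI : IsProbabilityMeasure (weightLaw n d P Q mstar) := by
    rw [weightLaw]
    exact MeasureTheory.Measure.pi.instIsProbabilityMeasure _
  rcases Nat.eq_zero_or_pos ℓ with hl0 | hlpos
  · subst hl0
    simp only [pow_zero, ENNReal.ofReal_one]
    exact prob_le_one
  -- notation
  set g : (Unit ⊕ ℝ) → ℝ≥0∞ := lrO n d P Q with hgdef
  have hg : Measurable g := Measure.measurable_rnDeriv _ _
  set D : Finset (Fin n) := Finset.univ.filter (fun i => m i ≠ mstar i) with hDdef
  have hDcard : D.card = ℓ := hl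
  have hDne : D.Nonempty := Finset.card_pos.1 (by rw [hDcard]; exact hlpos)
  obtain ⟨i0, hi0⟩ := hDne
  have hn : 0 < n := i0.pos
  have hd : 0 < d := by
    rcases eq_or_lt_of_le hd0 with h | h
    · exfalso
      subst h
      have hQp : Qprime n 0 Q ({(Sum.inl () : Unit ⊕ ℝ)}ᶜ) = 0 := by
        simp only [Qprime, zero_div, ENNReal.ofReal_zero, zero_smul, add_zero, sub_zero,
          ENNReal.ofReal_one, one_smul]
        rw [Measure.dirac_apply' _ (measurableSet_singleton _).compl]
        simp
      have h2 := habs hQp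
      rw [Measure.map_apply measurable_inr (measurableSet_singleton _).compl] at h2
      have hpre : (Sum.inr : ℝ → Unit ⊕ ℝ) ⁻¹' ({Sum.inl ()}ᶜ) = Set.univ := by
        ext y; simp
      rw [hpre, measure_univ] at h2
      exact one_ne_zero h2
    · exact h
  -- the per-edge factor and product
  set φ : (Fin n × Fin n) → (Unit ⊕ ℝ) → ℝ≥0∞ := sqrtFactor n d P Q mstar m with hφdef
  set Φ : ((Fin n × Fin n) → Unit ⊕ ℝ) → ℝ≥0∞ := fun w => ∏ e, φ e (w e) with hΦdef
  have hΦm : Measurable Φ :=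
    Finset.measurable_prod _ fun e _ =>
      (sqrtFactor_measurable n d P Q mstar m e).comp (measurable_pi_apply e)
  have hmemD : ∀ i : Fin n, i ∈ D ↔ m i ≠ mstar i := by
    intro i; rw [hDdef]; simp
  -- values of φ
  have hφ1 : ∀ i ∈ D, φ (i, m i) = fun y => g y ^ (1/2 : ℝ) := by
    intro i hi
    rw [hφdef, sqrtFactor, if_pos ⟨(hmemD i).1 hi, rfl⟩]
  have hφ2 : ∀ i ∈ D, φ (i, mstar i) = fun y => (g y ^ (1/2 : ℝ))⁻¹ := by
    intro i hi
    rw [hφdef, sqrtFactor, if_neg, if_pos ⟨(hmemD i).1 hi, rfl⟩]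
    rintro ⟨h1, h2⟩
    exact h1 h2.symm
  -- edge sets
  set E₁ : Finset (Fin n × Fin n) := D.image (fun i => (i, m i)) with hE₁def
  set E₂ : Finset (Fin n × Fin n) := D.image (fun i => (i, mstar i)) with hE₂def
  have hinj1 : Function.Injective (fun i : Fin n => (i, m i)) :=
    fun a b hab => congrArg Prod.fst hab
  have hinj2 : Function.Injective (fun i : Fin n => (i, mstar i)) :=
    fun a b hab => congrArg Prod.fst hab
  have hE₁card : E₁.card = ℓ := by rw [hE₁def, Finset.card_image_of_injective _ hinj1, hDcard]
  have hE₂card : E₂.card = ℓ := by rw [hE₂def, Finset.card_image_of_injective _ hinj2, hDcard]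
  have hdisj : Disjoint E₁ E₂ := by
    rw [Finset.disjoint_left]
    rintro e he1 he2
    obtain ⟨i, hi, rfl⟩ := Finset.mem_image.1 he1
    obtain ⟨j, hj, hji⟩ := Finset.mem_image.1 he2
    have hij : j = i := congrArg Prod.fst hji
    subst hij
    have : mstar j = m j := congrArg Prod.snd hji
    exact (hmemD j).1 hi this.symm
  -- bad null set
  set Sbad : Set (Unit ⊕ ℝ) := {y | g y = ∞} with hSbaddef
  have hSbadmeas : MeasurableSet Sbad := hg (measurableSet_singleton ∞)
  have hSbadnull : (P.map Sum.inr) Sbad = 0 := by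
    have h1 : ∀ᵐ y ∂(P.map Sum.inr), g y < ∞ :=
      (Measure.rnDeriv_lt_top (P.map Sum.inr) (Qprime n d Q)).filter_mono habs.ae_le
    rw [ae_iff] at h1
    have : Sbad = {y | ¬ g y < ∞} := by
      ext y; simp [hSbaddef, lt_top_iff_ne_top]
    rw [this]
    exact h1
  set N : Set ((Fin n × Fin n) → Unit ⊕ ℝ) :=
    ⋃ i ∈ (↑D : Set (Fin n)), (fun w => w (i, mstar i)) ⁻¹' Sbad with hNdef
  have hNnull : weightLaw n d P Q mstar N = 0 := by
    rw [hNdef]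
    refine (measure_biUnion_null_iff D.countable_toSet).2 fun i hi => ?_
    have hlaw : edgeLaw n d P Q mstar (i, mstar i) = P.map Sum.inr := by
      rw [edgeLaw, if_pos rfl]
    have := Measure.pi_eval_preimage_null (μ := fun e => edgeLaw n d P Q mstar e)
      (i := (i, mstar i)) (s := Sbad) (by show edgeLaw n d P Q mstar (i, mstar i) Sbad = 0; rw [hlaw]; exact hSbadnull)
    exact this
  -- thresholds
  set εfull : ℝ≥0∞ := ENNReal.ofReal (Real.exp (x * ℓ)) with hεfulldef
  set εhalf : ℝ≥0∞ := ENNReal.ofReal (Real.exp (x * ℓ / 2)) with hεhalfdef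
  have hεhalf0 : εhalf ≠ 0 := by
    rw [hεhalfdef, Ne, ENNReal.ofReal_eq_zero, not_le]
    exact Real.exp_pos _
  have hεhalft : εhalf ≠ ∞ := ENNReal.ofReal_ne_top
  have hεrpow : εfull ^ (1/2 : ℝ) = εhalf := by
    rw [hεfulldef, ENNReal.ofReal_rpow_of_pos (Real.exp_pos _), hεhalfdef]
    congr 1
    rw [← Real.exp_mul]
    ring_nf
  -- event inclusion
  have hsubset : {w | εfull ≤ postRatio n d P Q mstar m w}
      ⊆ {w | εhalf ≤ Φ w} ∪ N := by
    intro w hw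
    by_cases hwN : w ∈ N
    · exact Or.inr hwN
    refine Or.inl ?_
    have hfin : ∀ i ∈ D, g (w (i, mstar i)) ≠ ∞ := by
      intro i hi
      intro hcon
      exact hwN (Set.mem_biUnion hi hcon)
    have hpost : postRatio n d P Q mstar m w
        = (∏ i ∈ D, g (w (i, m i))) * (∏ i ∈ D, g (w (i, mstar i)))⁻¹ := rfl
    have h3 : εfull ≤ (∏ i ∈ D, g (w (i, m i))) * ∏ i ∈ D, (g (w (i, mstar i)))⁻¹ := by
      refine le_trans ?_ (mul_le_mul_right (aux_prod_inv_le _ _ hfin) _)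
      rw [← hpost]
      exact hw
    have h4 : εhalf ≤ ((∏ i ∈ D, g (w (i, m i))) * ∏ i ∈ D, (g (w (i, mstar i)))⁻¹) ^ (1/2:ℝ) := by
      rw [← hεrpow]
      exact ENNReal.rpow_le_rpow h3 (by norm_num)
    refine le_trans h4 (le_of_eq ?_)
    rw [ENNReal.mul_rpow_of_nonneg _ _ (by norm_num : (0:ℝ) ≤ 1/2),
      aux_prod_rpow _ _ (by norm_num : (0:ℝ) ≤ 1/2),
      aux_prod_rpow _ _ (by norm_num : (0:ℝ) ≤ 1/2)]
    have hsplitΦ : Φ w = (∏ e ∈ E₁, φ e (w e)) * ∏ e ∈ E₂, φ e (w e) := by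
      rw [← Finset.prod_union hdisj, hΦdef]
      refine (Finset.prod_subset (Finset.subset_univ _) fun e _ he => ?_).symm
      have h1 : ¬ (m e.1 ≠ mstar e.1 ∧ e.2 = m e.1) := by
        rintro ⟨ha, hb⟩
        refine he (Finset.mem_union_left _ (Finset.mem_image.2 ⟨e.1, (hmemD e.1).2 ha, ?_⟩))
        exact Prod.ext rfl hb.symm
      have h2 : ¬ (m e.1 ≠ mstar e.1 ∧ e.2 = mstar e.1) := by
        rintro ⟨ha, hb⟩
        refine he (Finset.mem_union_right _ (Finset.mem_image.2 ⟨e.1, (hmemD e.1).2 ha, ?_⟩))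
        exact Prod.ext rfl hb.symm
      rw [hφdef, sqrtFactor, if_neg h1, if_neg h2]
    rw [hsplitΦ, hE₁def, hE₂def, Finset.prod_image (fun a _ b _ hab => hinj1 hab),
      Finset.prod_image (fun a _ b _ hab => hinj2 hab)]
    congr 1
    · exact Finset.prod_congr rfl fun i hi => by rw [hφ1 i hi]
    · refine Finset.prod_congr rfl fun i hi => ?_
      rw [hφ2 i hi, ENNReal.inv_rpow]
  -- Chernoff/Markov bound
  set K : ℝ≥0∞ := ENNReal.ofReal (Real.sqrt (d / n) * bhat P Q) with hKdef
  have hfac : ∀ e : Fin n × Fin n,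
      ∫⁻ y, φ e y ∂(edgeLaw n d P Q mstar e) ≤ if e ∈ E₁ ∪ E₂ then K else 1 := by
    intro e
    by_cases h1 : m e.1 ≠ mstar e.1 ∧ e.2 = m e.1
    · have he : e ∈ E₁ ∪ E₂ :=
        Finset.mem_union_left _
          (Finset.mem_image.2 ⟨e.1, (hmemD e.1).2 h1.1, Prod.ext rfl h1.2.symm⟩)
      rw [if_pos he]
      have hlaw : edgeLaw n d P Q mstar e = Qprime n d Q := by
        rw [edgeLaw, if_neg]
        rw [h1.2]
        exact h1.1
      have hφe : φ e = fun y => g y ^ (1/2:ℝ) := by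
        rw [hφdef, sqrtFactor, if_pos h1]
      rw [hlaw, hφe, hKdef]
      exact factor_unplanted_le hP hQ hd hdn habs
    · by_cases h2 : m e.1 ≠ mstar e.1 ∧ e.2 = mstar e.1
      · have he : e ∈ E₁ ∪ E₂ :=
          Finset.mem_union_right _
            (Finset.mem_image.2 ⟨e.1, (hmemD e.1).2 h2.1, Prod.ext rfl h2.2.symm⟩)
        rw [if_pos he]
        have hlaw : edgeLaw n d P Q mstar e = P.map Sum.inr := by
          rw [edgeLaw, if_pos h2.2]
        have hφe : φ e = fun y => (g y ^ (1/2:ℝ))⁻¹ := by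
          rw [hφdef, sqrtFactor, if_neg h1, if_pos h2]
        rw [hlaw, hφe, hKdef]
        exact le_trans (factor_planted_le hP hQ habs) (factor_unplanted_le hP hQ hd hdn habs)
      · have hφe : φ e = fun _ => 1 := by
          rw [hφdef, sqrtFactor, if_neg h1, if_neg h2]
        have hne : e ∉ E₁ ∪ E₂ := by
          intro he
          rcases Finset.mem_union.1 he with h | h
          · obtain ⟨i, hi, rfl⟩ := Finset.mem_image.1 h
            exact h1 ⟨(hmemD i).1 hi, rfl⟩
          · obtain ⟨i, hi, rfl⟩ := Finset.mem_image.1 h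
            exact h2 ⟨(hmemD i).1 hi, rfl⟩
        haveI := hedge e
        rw [if_neg hne, hφe, lintegral_one, measure_univ]
  have hlint : ∫⁻ w, Φ w ∂(weightLaw n d P Q mstar) ≤ K ^ (2 * ℓ) := by
    have hpi : ∫⁻ w, Φ w ∂(weightLaw n d P Q mstar)
        = ∏ e, ∫⁻ y, φ e y ∂(edgeLaw n d P Q mstar e) := by
      rw [weightLaw, hΦdef]
      exact aux_lintegral_pi_prod (fun e => edgeLaw n d P Q mstar e) (fun e => φ e)
        (fun e => sqrtFactor_measurable n d P Q mstar m e)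
    rw [hpi]
    calc ∏ e, ∫⁻ y, φ e y ∂(edgeLaw n d P Q mstar e)
        ≤ ∏ e, (if e ∈ E₁ ∪ E₂ then K else 1) :=
          Finset.prod_le_prod' fun e _ => hfac e
      _ = K ^ (2 * ℓ) := by
          rw [Finset.prod_ite_mem, Finset.univ_inter, Finset.prod_const,
            Finset.card_union_of_disjoint hdisj, hE₁card, hE₂card]
          ring_nf
  have hmarkov : weightLaw n d P Q mstar {w | εhalf ≤ Φ w} ≤ εhalf⁻¹ * K ^ (2 * ℓ) := by
    have h1 : εhalf * weightLaw n d P Q mstar {w | εhalf ≤ Φ w}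
        ≤ ∫⁻ w, Φ w ∂(weightLaw n d P Q mstar) :=
      mul_meas_ge_le_lintegral₀ hΦm.aemeasurable εhalf
    calc weightLaw n d P Q mstar {w | εhalf ≤ Φ w}
        = εhalf⁻¹ * (εhalf * weightLaw n d P Q mstar {w | εhalf ≤ Φ w}) := by
          rw [← mul_assoc, ENNReal.inv_mul_cancel hεhalf0 hεhalft, one_mul]
      _ ≤ εhalf⁻¹ * K ^ (2 * ℓ) := mul_le_mul_right (le_trans h1 hlint) _
  -- final numeric bound
  have hnum : εhalf⁻¹ * K ^ (2 * ℓ)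
      ≤ ENNReal.ofReal ((d / n * Real.exp (-(alphaDiv P Q + x / 2))) ^ ℓ) := by
    have hb0 : 0 ≤ bhat P Q := bhat_nonneg P Q
    have hk0 : 0 ≤ Real.sqrt (d / n) * bhat P Q := mul_nonneg (Real.sqrt_nonneg _) hb0
    have hinv : εhalf⁻¹ = ENNReal.ofReal (Real.exp (-(x * ℓ / 2))) := by
      rw [hεhalfdef, ← ENNReal.ofReal_inv_of_pos (Real.exp_pos _), ← Real.exp_neg]
    rw [hinv, hKdef, ← ENNReal.ofReal_pow hk0, ← ENNReal.ofReal_mul (Real.exp_pos _).le]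
    refine ENNReal.ofReal_le_ofReal ?_
    have hdn' : 0 < d / n := by positivity
    set b : ℝ := bhat P Q with hbdef
    have hsq : (Real.sqrt (d / n) * b) ^ (2 * ℓ) = (d / n) ^ ℓ * (b ^ 2) ^ ℓ := by
      rw [mul_pow, pow_mul, pow_mul, Real.sq_sqrt hdn'.le]
    have hbexp : (b ^ 2) ^ ℓ ≤ Real.exp (2 * Real.log b) ^ ℓ := by
      refine pow_le_pow_left₀ (sq_nonneg b) ?_ ℓ
      rcases eq_or_lt_of_le hb0 with h | h
      · rw [← h]
        simpa using (Real.exp_pos _).le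
      · rw [show (2:ℝ) * Real.log b = Real.log b + Real.log b by ring, Real.exp_add,
          Real.exp_log h, sq]
    have hBpow : Real.exp (-(x / 2)) ^ ℓ = Real.exp (-(x * ℓ / 2)) := by
      rw [← Real.exp_nat_mul]
      congr 1
      push_cast
      ring
    have hexpand : (d / n * Real.exp (-(alphaDiv P Q + x / 2))) ^ ℓ
        = (d / n) ^ ℓ * Real.exp (2 * Real.log b) ^ ℓ * Real.exp (-(x * ℓ / 2)) := by
      rw [alphaDiv, ← hbdef]
      rw [show -(-(2 * Real.log b) + x / 2) = 2 * Real.log b + -(x / 2) by ring,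
        Real.exp_add, ← mul_assoc, mul_pow, mul_pow, hBpow]
    rw [hexpand, hsq]
    calc Real.exp (-(x * ℓ / 2)) * ((d / n) ^ ℓ * (b ^ 2) ^ ℓ)
        ≤ Real.exp (-(x * ℓ / 2)) * ((d / n) ^ ℓ * Real.exp (2 * Real.log b) ^ ℓ) := by
          have := mul_le_mul_of_nonneg_left hbexp (le_of_lt (pow_pos hdn' ℓ))
          exact mul_le_mul_of_nonneg_left this (Real.exp_pos _).le
      _ = (d / n) ^ ℓ * Real.exp (2 * Real.log b) ^ ℓ * Real.exp (-(x * ℓ / 2)) := by ring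
  -- put everything together
  calc weightLaw n d P Q mstar {w | εfull ≤ postRatio n d P Q mstar m w}
      ≤ weightLaw n d P Q mstar ({w | εhalf ≤ Φ w} ∪ N) := measure_mono hsubset
    _ ≤ weightLaw n d P Q mstar {w | εhalf ≤ Φ w} + weightLaw n d P Q mstar N :=
        measure_union_le _ _
    _ = weightLaw n d P Q mstar {w | εhalf ≤ Φ w} := by rw [hNnull, add_zero]
    _ ≤ εhalf⁻¹ * K ^ (2 * ℓ) := hmarkov
    _ ≤ ENNReal.ofReal ((d / n * Real.exp (-(alphaDiv P Q + x / 2))) ^ ℓ) := hnum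

end PlantedMatching
end
end

section
/- Let G be a bi-colored bipartite graph on [n] × [n]' whose n red edges form the perfect matching {(i, i') : i ∈ [n]}, and whose blue edges are generated as a bipartite Erdős–Rényi graph: each pair (i, j') with i ≠ j is a blue edge independently with probability D/n. If n ≥ 525 and D ≥ 256·log(32e), then with probability at least 1 − exp(−Dn/2^{14}), G contains at least exp(n/20) distinct alternating cycles, each of length at least 3n/4. -/
open MeasureTheory
open scoped ENNReal BigOperators

noncomputable section

namespace Stmt13Aux

open Finset

/-! ### Deterministic combinatorics: expansion implies many long alternating cycles. -/

variable {n : ℕ}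

def Edg (ω : Fin n × Fin n → Bool) (a b : Fin n) : Prop := ω (a, b) = true ∧ a ≠ b

def EXP (n t : ℕ) (ω : Fin n × Fin n → Bool) : Prop :=
  ∀ S T : Finset (Fin n), Disjoint S T → S.card = t + 1 → T.card = t + 1 →
    ∃ a ∈ S, ∃ b ∈ T, ω (a, b) = true

lemma EXP.le {t : ℕ} {ω} (h : EXP n t ω) {S T : Finset (Fin n)} (hd : Disjoint S T)
    (hS : t + 1 ≤ S.card) (hT : t + 1 ≤ T.card) :
    ∃ a ∈ S, ∃ b ∈ T, ω (a, b) = true := by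
  obtain ⟨S', hS', hScard⟩ := Finset.exists_subset_card_eq hS
  obtain ⟨T', hT', hTcard⟩ := Finset.exists_subset_card_eq hT
  obtain ⟨a, ha, b, hb, hab⟩ := h S' T' (hd.mono hS' hT') hScard hTcard
  exact ⟨a, hS' ha, b, hT' hb, hab⟩

structure DFSSt (ω : Fin n × Fin n → Bool) (V : Finset (Fin n)) (t : ℕ)
    (D : Finset (Fin n)) (l : List (Fin n)) (U : Finset (Fin n)) : Prop where
  nodup : l.Nodup
  chain : l.Chain' (Edg ω)
  part : D ∪ l.toFinset ∪ U = V
  dDl : Disjoint D l.toFinset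
  dDU : Disjoint D U
  dlU : Disjoint l.toFinset U
  noedge : ∀ d ∈ D, ∀ u ∈ U, ω (d, u) = false
  dcard : D.card ≤ t

lemma dfs_aux {ω : Fin n × Fin n → Bool} {V : Finset (Fin n)} {t : ℕ} (hE : EXP n t ω) :
    ∀ (N : ℕ) (D : Finset (Fin n)) (l : List (Fin n)) (U : Finset (Fin n)),
      2 * U.card + l.length ≤ N → DFSSt ω V t D l U → t ≤ U.card →
      ∃ D' l' U', DFSSt ω V t D' l' U' ∧ U'.card = t := by
  intro N
  induction N with
  | zero =>
    intro D l U hm hst hU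
    exact ⟨D, l, U, hst, by omega⟩
  | succ N ih =>
    intro D l U hm hst hU
    rcases eq_or_lt_of_le hU with h | h
    · exact ⟨D, l, U, hst, h.symm⟩
    · by_cases hl : l = []
      · subst hl
        obtain ⟨u, hu⟩ : U.Nonempty := card_pos.mp (by omega)
        have hpart : D ∪ ([u] : List (Fin n)).toFinset ∪ U.erase u = V := by
          rw [← hst.part]
          ext x
          simp only [Finset.mem_union, List.toFinset_cons, List.toFinset_nil,
            insert_empty_eq, Finset.mem_insert, Finset.mem_erase, Finset.mem_singleton,
            List.toFinset_nil, Finset.notMem_empty]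
          by_cases hx : x = u <;> simp [hx, hu]
        have hDu : Disjoint D {u} := by
          simp only [Finset.disjoint_singleton_right]
          exact fun hc => (Finset.disjoint_left.mp hst.dDU) hc hu
        refine ih D [u] (U.erase u) ?_ ?_ ?_
        · have := card_erase_of_mem hu
          simp only [List.length_cons, List.length_nil]
          omega
        · refine ⟨by simp, List.isChain_singleton _, hpart, by simpa using hDu,
            hst.dDU.mono_right (erase_subset _ _), ?_, ?_, hst.dcard⟩
          · simp only [List.toFinset_cons, List.toFinset_nil, insert_empty_eq]
            simp only [Finset.disjoint_singleton_left, Finset.mem_erase, ne_eq]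
            tauto
          · exact fun d hd u' hu' => hst.noedge d hd u' (Finset.mem_of_mem_erase hu')
        · have := card_erase_of_mem hu
          omega
      · set v := l.getLast hl with hv
        have hvl : v ∈ l.toFinset := by
          simp only [List.mem_toFinset]
          exact List.getLast_mem hl
        by_cases hp : ∃ u ∈ U, ω (v, u) = true
        · -- push
          obtain ⟨u, hu, hedge⟩ := hp
          have hul : u ∉ l.toFinset := Finset.disjoint_right.mp hst.dlU hu
          have hvu : v ≠ u := fun hc => hul (hc ▸ hvl)
          have hnodup : (l ++ [u]).Nodup := by
            rw [List.nodup_append']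
            refine ⟨hst.nodup, by simp, ?_⟩
            intro x hx
            simp only [List.mem_singleton]
            intro hxu
            subst hxu
            exact hul (List.mem_toFinset.mpr hx)
          have hchain : (l ++ [u]).Chain' (Edg ω) := by
            rw [List.Chain', List.isChain_append]
            refine ⟨hst.chain, by simp, ?_⟩
            intro x hx y hy
            rw [List.getLast?_eq_getLast hl] at hx
            simp only [Option.mem_def, Option.some_inj] at hx
            simp only [List.head?_cons, Option.mem_def, Option.some_inj] at hy
            subst hx; subst hy
            exact ⟨hedge, hvu⟩
          have hpart : D ∪ (l ++ [u]).toFinset ∪ U.erase u = V := by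
            rw [← hst.part]
            ext x
            simp only [Finset.mem_union, List.toFinset_append, List.toFinset_cons,
              List.toFinset_nil, insert_empty_eq, Finset.mem_insert, Finset.mem_erase,
              Finset.mem_singleton, List.mem_toFinset]
            by_cases hx : x = u <;> simp [hx, hu, List.mem_toFinset] <;> tauto
          refine ih D (l ++ [u]) (U.erase u) ?_ ?_ ?_
          · have := card_erase_of_mem hu
            simp only [List.length_append, List.length_cons, List.length_nil]
            omega
          · refine ⟨hnodup, hchain, hpart, ?_, hst.dDU.mono_right (erase_subset _ _), ?_,
              ?_, hst.dcard⟩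
            · rw [List.toFinset_append]
              simp only [Finset.disjoint_union_right]
              refine ⟨hst.dDl, ?_⟩
              simp only [List.toFinset_cons, List.toFinset_nil, insert_empty_eq,
                Finset.disjoint_singleton_right]
              exact fun hc => (Finset.disjoint_left.mp hst.dDU) hc hu
            · rw [List.toFinset_append]
              simp only [Finset.disjoint_union_left]
              constructor
              · exact hst.dlU.mono_right (erase_subset _ _)
              · simp only [List.toFinset_cons, List.toFinset_nil, insert_empty_eq,
                  Finset.disjoint_singleton_left, Finset.mem_erase, ne_eq]
                tauto
            · exact fun d hd u' hu' => hst.noedge d hd u' (Finset.mem_of_mem_erase hu')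
          · have := card_erase_of_mem hu
            omega
        · -- pop
          have hdecomp : l.dropLast ++ [v] = l := List.dropLast_append_getLast hl
          have hvD : v ∉ D := Finset.disjoint_right.mp hst.dDl hvl
          have hvU : v ∉ U := Finset.disjoint_left.mp hst.dlU hvl
          have hvdrop : v ∉ l.dropLast := by
            have := hst.nodup
            rw [← hdecomp, List.nodup_append'] at this
            intro hc
            exact this.2.2 hc (by simp)
          have htfin : l.toFinset = insert v l.dropLast.toFinset := by
            conv_lhs => rw [← hdecomp]
            rw [List.toFinset_append]
            ext x; simp [or_comm]
          have hDcard : (insert v D).card ≤ t := by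
            by_contra hc
            push_neg at hc
            have hins : (insert v D).card = D.card + 1 := card_insert_of_notMem hvD
            have hdisj : Disjoint (insert v D) U := by
              simp only [Finset.disjoint_insert_left]
              exact ⟨hvU, hst.dDU⟩
            obtain ⟨a, ha, b, hb, hab⟩ := hE.le hdisj (by omega) (by omega)
            rcases Finset.mem_insert.mp ha with rfl | ha'
            · exact hp ⟨b, hb, hab⟩
            · have := hst.noedge a ha' b hb
              simp [this] at hab
          have hnoedge : ∀ d ∈ insert v D, ∀ u ∈ U, ω (d, u) = false := by
            intro d hd u hu
            rcases Finset.mem_insert.mp hd with rfl | hd'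
            · by_contra hc
              exact hp ⟨u, hu, by simpa using hc⟩
            · exact hst.noedge d hd' u hu
          have hpart : insert v D ∪ l.dropLast.toFinset ∪ U = V := by
            rw [← hst.part, htfin]
            ext x
            simp only [Finset.mem_union, Finset.mem_insert]
            tauto
          refine ih (insert v D) l.dropLast U ?_ ?_ hU
          · have hlen : l.length ≠ 0 := by simpa using hl
            have := l.length_dropLast
            omega
          · refine ⟨hst.nodup.sublist (List.dropLast_sublist l),
              hst.chain.prefix ⟨[v], hdecomp⟩, hpart, ?_, ?_, ?_, hnoedge, hDcard⟩
            · simp only [Finset.disjoint_insert_left]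
              refine ⟨by simpa [List.mem_toFinset] using hvdrop, ?_⟩
              exact hst.dDl.mono_right (by rw [htfin]; exact subset_insert _ _)
            · simp only [Finset.disjoint_insert_left]
              exact ⟨hvU, hst.dDU⟩
            · exact hst.dlU.mono_left (by rw [htfin]; exact subset_insert _ _)

lemma dfs {t : ℕ} {ω : Fin n × Fin n → Bool} (hE : EXP n t ω) (V : Finset (Fin n))
    (hV : t ≤ V.card) :
    ∃ l : List (Fin n), l.Nodup ∧ l.Chain' (Edg ω) ∧ (∀ x ∈ l, x ∈ V) ∧
      V.card ≤ l.length + 2 * t := by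
  have hst0 : DFSSt ω V t ∅ [] V :=
    ⟨by simp, List.isChain_nil, by simp, by simp, by simp, by simp, by simp, by simp⟩
  obtain ⟨D, l, U, st, hU⟩ := dfs_aux hE (2 * V.card) ∅ [] V (by simp) hst0 hV
  refine ⟨l, st.nodup, st.chain, ?_, ?_⟩
  · intro x hx
    rw [← st.part]
    simp [List.mem_toFinset, hx]
  · have h1 : (D ∪ l.toFinset ∪ U).card ≤ D.card + l.toFinset.card + U.card := by
      calc (D ∪ l.toFinset ∪ U).card ≤ (D ∪ l.toFinset).card + U.card := card_union_le _ _
        _ ≤ D.card + l.toFinset.card + U.card := by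
            have := card_union_le D l.toFinset
            omega
    rw [st.part] at h1
    have h2 : l.toFinset.card = l.length := List.toFinset_card_of_nodup st.nodup
    have := st.dcard
    omega

lemma getD_inj {α : Type*} {l : List α} (hnd : l.Nodup) {i j : ℕ} (hi : i < l.length)
    (hj : j < l.length) (d : α) (h : l.getD i d = l.getD j d) : i = j := by
  rw [List.getD_eq_getElem l d hi, List.getD_eq_getElem l d hj] at h
  exact (hnd.getElem_inj_iff).mp h

lemma chain'_getD {α : Type*} {R : α → α → Prop} {l : List α} (h : List.Chain' R l) {i : ℕ}
    (hi : i + 1 < l.length) (d : α) : R (l.getD i d) (l.getD (i + 1) d) := by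
  rw [List.getD_eq_getElem l d (by omega), List.getD_eq_getElem l d hi]
  have := List.isChain_iff_getElem.mp h i (by omega)
  simpa using this

lemma getD_mem {α : Type*} {l : List α} {i : ℕ} (hi : i < l.length) (d : α) :
    l.getD i d ∈ l := by
  rw [List.getD_eq_getElem l d hi]
  exact List.getElem_mem _

lemma close {t : ℕ} {ω : Fin n × Fin n → Bool} (hE : EXP n t ω) (l : List (Fin n))
    (hnd : l.Nodup) (hch : l.Chain' (Edg ω)) (hm : 2 * (t + 1) ≤ l.length) :
    ∃ (r : ℕ) (_ : NeZero r) (c : ZMod r → Fin n),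
      Function.Injective c ∧ (∀ z : ZMod r, ω (c (z + 1), c z) = true ∧ c (z + 1) ≠ c z) ∧
      l.length ≤ r + 2 * t ∧ (∀ z, c z ∈ l) := by
  set m := l.length with hmdef
  have htake_len : (l.take (t + 1)).length = t + 1 := by
    rw [List.length_take]; omega
  have hdrop_len : (l.drop (m - (t + 1))).length = t + 1 := by
    rw [List.length_drop]; omega
  have htake_nd : (l.take (t + 1)).Nodup := hnd.sublist (l.take_sublist _)
  have hdrop_nd : (l.drop (m - (t + 1))).Nodup := hnd.sublist (l.drop_sublist _)
  set A := (l.take (t + 1)).toFinset with hA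
  set B := (l.drop (m - (t + 1))).toFinset with hB
  have hAcard : A.card = t + 1 := by
    rw [hA, List.toFinset_card_of_nodup htake_nd, htake_len]
  have hBcard : B.card = t + 1 := by
    rw [hB, List.toFinset_card_of_nodup hdrop_nd, hdrop_len]
  have hdisj : Disjoint B A := by
    have hdd : l.drop (m - (t + 1)) = (l.drop (t + 1)).drop (m - (t + 1) - (t + 1)) := by
      rw [List.drop_drop]
      congr 1
      omega
    have hnd2 := hnd
    rw [← l.take_append_drop (t + 1), List.nodup_append'] at hnd2
    rw [Finset.disjoint_left]
    intro x hxB hxA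
    have hx1 : x ∈ l.take (t + 1) := List.mem_toFinset.mp hxA
    have hx2 : x ∈ l.drop (t + 1) := by
      have := List.mem_toFinset.mp hxB
      rw [hdd] at this
      exact (List.drop_sublist _ _).mem this
    exact hnd2.2.2 hx1 hx2
  obtain ⟨b, hbB, a, haA, hab⟩ := hE.le hdisj hBcard.ge hAcard.ge
  obtain ⟨i, hi, hia⟩ := List.mem_iff_getElem.mp (List.mem_toFinset.mp haA)
  obtain ⟨jd, hjd, hjb⟩ := List.mem_iff_getElem.mp (List.mem_toFinset.mp hbB)
  rw [htake_len] at hi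
  rw [hdrop_len] at hjd
  have him : i < m := by omega
  rw [List.getElem_take] at hia
  rw [List.getElem_drop] at hjb
  set j := m - (t + 1) + jd with hj
  have hjm : j < m := by omega
  have hij : i < j := by omega
  set r := j - i + 1 with hr
  have hr2 : 2 ≤ r := by omega
  haveI hrnz : NeZero r := ⟨by omega⟩
  haveI : Fact (1 < r) := ⟨by omega⟩
  have hvallt : ∀ z : ZMod r, z.val < r := fun z => ZMod.val_lt z
  have hlen : l.length = m := rfl
  refine ⟨r, hrnz, fun z => l.getD (j - z.val) a, ?_, ?_, by omega, ?_⟩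
  · intro z1 z2 heq
    simp only at heq
    have hidx : j - z1.val = j - z2.val :=
      getD_inj hnd (by omega) (by omega) a heq
    have h1 := hvallt z1
    have h2 := hvallt z2
    apply ZMod.val_injective
    omega
  · intro z
    have hzval : (z + 1).val = (z.val + 1) % r := by
      rw [ZMod.val_add, ZMod.val_one]
    by_cases hz : z.val + 1 = r
    · have h0 : (z + 1).val = 0 := by rw [hzval, hz, Nat.mod_self]
      have hcz1 : j - (z + 1).val = j := by rw [h0]; omega
      have hcz : j - z.val = i := by
        have := hvallt z
        omega
      simp only [hcz1, hcz]
      have hja : l.getD j a = b := by rw [List.getD_eq_getElem l a (by omega)]; exact hjb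
      have hia' : l.getD i a = a := by rw [List.getD_eq_getElem l a (by omega)]; exact hia
      rw [hja, hia']
      refine ⟨hab, ?_⟩
      intro hc
      have hgl : l[j]'(by omega) = l[i]'(by omega) := by rw [hjb, hia, hc]
      have := (hnd.getElem_inj_iff).mp hgl
      omega
    · have hlt : z.val + 1 < r := by
        have := hvallt z; omega
      have hzval' : (z + 1).val = z.val + 1 := by
        rw [hzval, Nat.mod_eq_of_lt hlt]
      have hidx1 : j - (z + 1).val = j - z.val - 1 := by rw [hzval']; omega
      have hidx2 : j - z.val - 1 + 1 = j - z.val := by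
        have := hvallt z
        omega
      have hchg := chain'_getD hch (i := j - z.val - 1) (by omega) a
      rw [hidx2] at hchg
      simp only [hidx1]
      refine ⟨hchg.1, hchg.2⟩
  · intro z
    simp only
    exact getD_mem (by omega) a

lemma desc_le_desc (k : ℕ) : ∀ {a b : ℕ}, 2 * b ≤ a →
    2 ^ k * b.descFactorial k ≤ a.descFactorial k := by
  induction k with
  | zero => intro a b _; simp
  | succ k ih =>
    intro a b h
    rw [Nat.descFactorial_succ, Nat.descFactorial_succ]
    calc 2 ^ (k + 1) * ((b - k) * b.descFactorial k)
        = (2 * (b - k)) * (2 ^ k * b.descFactorial k) := by ring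
      _ ≤ (a - k) * a.descFactorial k :=
          Nat.mul_le_mul (by omega) (ih h)

lemma choose_two_mul_le {k a b : ℕ} (hk : 2 * b ≤ a) : 2 ^ k * b.choose k ≤ a.choose k := by
  have h1 := desc_le_desc k hk
  rw [Nat.descFactorial_eq_factorial_mul_choose, Nat.descFactorial_eq_factorial_mul_choose] at h1
  have h2 : k.factorial * (2 ^ k * b.choose k) ≤ k.factorial * a.choose k := by
    calc k.factorial * (2 ^ k * b.choose k) = 2 ^ k * (k.factorial * b.choose k) := by ring
      _ ≤ k.factorial * a.choose k := h1
  exact Nat.le_of_mul_le_mul_left h2 k.factorial_pos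

open Classical in
lemma det (hn : 525 ≤ n) (ω : Fin n × Fin n → Bool) (hE : EXP n (n / 16) ω) :
    ∃ 𝒞 : Finset (Finset (Fin n × Fin n)),
      Real.exp ((n : ℝ) / 20) ≤ (𝒞.card : ℝ) ∧
      ∀ E ∈ 𝒞, PlantedMatching.IsAltCycleEdges Finset.univ
        (fun i j => ω (i, j) = true ∧ i ≠ j) (3 * n / 4) E := by
  set t := n / 16 with ht
  set k := n / 8 with hk
  set R0 := n - k - 4 * t with hR0
  set Bl : Fin n → Fin n → Prop := fun i j => ω (i, j) = true ∧ i ≠ j with hBl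
  set P : Finset (Fin n) → Finset (Fin n × Fin n) → Prop := fun X E =>
    PlantedMatching.IsAltCycleEdges Finset.univ Bl (3 * n / 4) E ∧
      R0 ≤ (E.image Prod.snd).card ∧ Disjoint (E.image Prod.snd) X with hP
  have step1 : ∀ X : Finset (Fin n), X.card = k → ∃ E, P X E := by
    intro X hX
    set V : Finset (Fin n) := Xᶜ with hV
    have hVcard : V.card = n - k := by
      rw [hV, Finset.card_compl, hX, Fintype.card_fin]
    obtain ⟨l, hnd, hch, hmemV, hlen⟩ := dfs hE V (by omega)
    have hlen2 : 2 * (t + 1) ≤ l.length := by omega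
    obtain ⟨r, hrnz, c, hinj, hedges, hrlen, hmem⟩ := close hE l hnd hch hlen2
    have hrR0 : R0 ≤ r := by omega
    have himg : (Finset.image (fun z : ZMod r => (c (z + 1), c z)) Finset.univ).image
        Prod.snd = Finset.image c Finset.univ := by
      rw [Finset.image_image]
      rfl
    refine ⟨Finset.image (fun z : ZMod r => (c (z + 1), c z)) Finset.univ, ?_, ?_, ?_⟩
    · refine ⟨r, hrnz, c, hinj, fun _ => Finset.mem_univ _, fun z => hedges z, ?_, rfl⟩
      have h8 : 3 * n ≤ 8 * r := by omega
      have h8' : (3 * (n : ℝ)) ≤ 8 * (r : ℝ) := by exact_mod_cast h8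
      linarith
    · rw [himg, Finset.card_image_of_injective _ hinj, Finset.card_univ, ZMod.card]
      exact hrR0
    · rw [himg, Finset.disjoint_left]
      intro x hx hxX
      simp only [Finset.mem_image, Finset.mem_univ, true_and] at hx
      obtain ⟨z, rfl⟩ := hx
      have hcv : c z ∈ V := hmemV _ (hmem z)
      rw [hV, Finset.mem_compl] at hcv
      exact hcv hxX
  set f : Finset (Fin n) → Finset (Fin n × Fin n) := fun X =>
    if h : ∃ E, P X E then h.choose else ∅ with hf
  set K : Finset (Finset (Fin n)) := Finset.powersetCard k Finset.univ with hK
  have hPf : ∀ X ∈ K, P X (f X) := by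
    intro X hXK
    have hXcard : X.card = k := (Finset.mem_powersetCard.mp hXK).2
    have h := step1 X hXcard
    rw [hf]
    simp only [dif_pos h]
    exact h.choose_spec
  set 𝒞 : Finset (Finset (Fin n × Fin n)) := K.image f with hC
  have hMdef : n - R0 = k + 4 * t := by omega
  have hfib : ∀ E ∈ 𝒞, (K.filter fun X => f X = E).card ≤ Nat.choose (k + 4 * t) k := by
    intro E hE𝒞
    obtain ⟨X₀, hX₀, hX₀E⟩ := Finset.mem_image.mp hE𝒞
    have hsub : (K.filter fun X => f X = E) ⊆
        Finset.powersetCard k (E.image Prod.snd)ᶜ := by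
      intro X hXf
      rw [Finset.mem_filter] at hXf
      obtain ⟨hXK, hXE⟩ := hXf
      rw [Finset.mem_powersetCard]
      refine ⟨?_, (Finset.mem_powersetCard.mp hXK).2⟩
      have hdisj := (hPf X hXK).2.2
      rw [hXE] at hdisj
      intro x hxX
      rw [Finset.mem_compl]
      exact fun hc => (Finset.disjoint_right.mp hdisj) hxX hc
    calc (K.filter fun X => f X = E).card
        ≤ (Finset.powersetCard k (E.image Prod.snd)ᶜ).card := Finset.card_le_card hsub
      _ = Nat.choose ((E.image Prod.snd)ᶜ).card k := Finset.card_powersetCard _ _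
      _ ≤ Nat.choose (k + 4 * t) k := by
          apply Nat.choose_le_choose
          have hvc := (hPf X₀ hX₀).2.1
          rw [hX₀E] at hvc
          rw [Finset.card_compl, Fintype.card_fin]
          omega
  have hKcard : K.card = Nat.choose n k := by
    rw [hK, Finset.card_powersetCard, Finset.card_univ, Fintype.card_fin]
  have hcount : Nat.choose n k ≤ Nat.choose (k + 4 * t) k * 𝒞.card := by
    rw [← hKcard]
    exact Finset.card_le_mul_card_image _ _ hfib
  have h2M : 2 * (k + 4 * t) ≤ n := by omega
  have hpow : 2 ^ k * Nat.choose (k + 4 * t) k ≤ Nat.choose (k + 4 * t) k * 𝒞.card :=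
    le_trans (choose_two_mul_le h2M) hcount
  have hchoosepos : 0 < Nat.choose (k + 4 * t) k := Nat.choose_pos (by omega)
  have hcard : 2 ^ k ≤ 𝒞.card := by
    have := hpow
    rw [mul_comm (2 ^ k) _] at this
    exact Nat.le_of_mul_le_mul_left this hchoosepos
  refine ⟨𝒞, ?_, ?_⟩
  · have hcast : ((2 : ℝ)) ^ k ≤ (𝒞.card : ℝ) := by exact_mod_cast hcard
    refine le_trans ?_ hcast
    have hlog : (2 : ℝ) ^ k = Real.exp (k * Real.log 2) := by
      rw [← Real.log_pow, Real.exp_log (by positivity)]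
    rw [hlog]
    apply Real.exp_le_exp.mpr
    have hk8 : n ≤ 8 * k + 7 := by omega
    have hk8' : (n : ℝ) ≤ 8 * (k : ℝ) + 7 := by exact_mod_cast hk8
    have hlog2 := Real.log_two_gt_d9
    have hn' : (525 : ℝ) ≤ (n : ℝ) := by exact_mod_cast hn
    nlinarith
  · intro E hE𝒞
    obtain ⟨X₀, hX₀, hX₀E⟩ := Finset.mem_image.mp hE𝒞
    have := (hPf X₀ hX₀).1
    rw [hX₀E] at this
    exact this

/-! ### The probabilistic part. -/

open PlantedMatching

instance (p : ℝ) : IsFiniteMeasure (bernoulliBool p) := by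
  constructor
  rw [bernoulliBool]
  simp only [Measure.coe_add, Measure.coe_smul, Pi.add_apply, Pi.smul_apply, smul_eq_mul]
  have h1 : Measure.dirac false (Set.univ : Set Bool) = 1 := by simp
  have h2 : Measure.dirac true (Set.univ : Set Bool) = 1 := by simp
  rw [h1, h2, mul_one, mul_one]
  exact ENNReal.add_lt_top.mpr ⟨ENNReal.ofReal_lt_top, ENNReal.ofReal_lt_top⟩

lemma bern_false (p : ℝ) : bernoulliBool p {false} = ENNReal.ofReal (1 - p) := by
  rw [bernoulliBool]
  simp only [Measure.coe_add, Measure.coe_smul, Pi.add_apply, Pi.smul_apply, smul_eq_mul]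
  rw [Measure.dirac_apply, Measure.dirac_apply]
  simp

lemma bern_univ (p : ℝ) :
    bernoulliBool p (Set.univ : Set Bool) = ENNReal.ofReal (1 - p) + ENNReal.ofReal p := by
  rw [bernoulliBool]
  simp only [Measure.coe_add, Measure.coe_smul, Pi.add_apply, Pi.smul_apply, smul_eq_mul]
  simp

lemma bern_univ_le (p : ℝ) (h0 : 0 ≤ p) (hp : p ≤ 1) :
    bernoulliBool p (Set.univ : Set Bool) ≤ 1 := by
  rw [bern_univ]
  rw [← ENNReal.ofReal_add (by linarith) h0]
  simp

lemma bern_univ_ge (p : ℝ) : 1 ≤ bernoulliBool p (Set.univ : Set Bool) := by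
  rw [bern_univ]
  calc (1 : ℝ≥0∞) = ENNReal.ofReal ((1 - p) + p) := by norm_num
    _ ≤ ENNReal.ofReal (1 - p) + ENNReal.ofReal p := ENNReal.ofReal_add_le

section Main

variable (n : ℕ) (D : ℝ)

noncomputable def coord (e : Fin n × Fin n) : Measure Bool :=
  if e.1 = e.2 then Measure.dirac false else bernoulliBool (D / n)

instance (e : Fin n × Fin n) : SigmaFinite (coord n D e) := by
  rw [coord]
  split <;> infer_instance

noncomputable def μpi : Measure (Fin n × Fin n → Bool) := Measure.pi (coord n D)

open Classical in
noncomputable def Zset (S T : Finset (Fin n)) : Set (Fin n × Fin n → Bool) :=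
  Set.pi Set.univ fun e => if e ∈ S ×ˢ T then ({false} : Set Bool) else Set.univ

lemma Zset_bound (hD0 : 0 ≤ D / n) {S T : Finset (Fin n)} (hd : Disjoint S T) {t : ℕ}
    (hS : S.card = t + 1) (hT : T.card = t + 1) :
    μpi n D (Zset n S T) ≤ ENNReal.ofReal (Real.exp (-(D / n))) ^ ((t + 1) ^ 2) := by
  classical
  rw [μpi, Zset, Measure.pi_pi]
  by_cases hp : D / n ≤ 1
  · calc ∏ e : Fin n × Fin n, coord n D e (if e ∈ S ×ˢ T then ({false} : Set Bool) else Set.univ)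
        ≤ ∏ e : Fin n × Fin n,
            (if e ∈ S ×ˢ T then ENNReal.ofReal (Real.exp (-(D / n))) else 1) := by
          apply Finset.prod_le_prod'
          intro e _
          by_cases he : e ∈ S ×ˢ T
          · simp only [he, if_true]
            have hne : e.1 ≠ e.2 := by
              rcases Finset.mem_product.mp he with ⟨h1, h2⟩
              exact fun hc => (Finset.disjoint_left.mp hd) h1 (hc ▸ h2)
            rw [coord, if_neg hne, bern_false]
            apply ENNReal.ofReal_le_ofReal
            have := Real.add_one_le_exp (-(D / n))
            linarith
          · simp only [he, if_false]
            rw [coord]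
            split
            · simp
            · exact bern_univ_le _ hD0 hp
      _ = ENNReal.ofReal (Real.exp (-(D / n))) ^ ((S ×ˢ T).card) := by
          rw [Finset.prod_ite_mem, Finset.univ_inter, Finset.prod_const]
      _ = ENNReal.ofReal (Real.exp (-(D / n))) ^ ((t + 1) ^ 2) := by
          rw [Finset.card_product, hS, hT]
          ring_nf
  · have hSne : S.Nonempty := Finset.card_pos.mp (by omega)
    have hTne : T.Nonempty := Finset.card_pos.mp (by omega)
    obtain ⟨a, ha⟩ := hSne
    obtain ⟨b, hb⟩ := hTne
    have hab : (a, b) ∈ S ×ˢ T := Finset.mem_product.mpr ⟨ha, hb⟩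
    have hne : a ≠ b := fun hc => (Finset.disjoint_left.mp hd) ha (hc ▸ hb)
    have hzero :
        coord n D (a, b) (if (a, b) ∈ S ×ˢ T then ({false} : Set Bool) else Set.univ) = 0 := by
      rw [if_pos hab, coord, if_neg hne, bern_false, ENNReal.ofReal_eq_zero.mpr (by linarith)]
    rw [Finset.prod_eq_zero (Finset.mem_univ (a, b)) hzero]
    exact zero_le

lemma μpi_univ_ge : 1 ≤ μpi n D Set.univ := by
  rw [μpi, ← Set.pi_univ Set.univ, Measure.pi_pi]
  apply Finset.one_le_prod'
  intro e _
  rw [coord]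
  split
  · simp
  · exact bern_univ_ge _

end Main

open Classical in
lemma union_bound (n : ℕ) (D : ℝ) (hD0 : 0 ≤ D / n) (t : ℕ) :
    μpi n D {ω | EXP n t ω}ᶜ ≤
      ((2 ^ n * 2 ^ n : ℕ) : ℝ≥0∞) * ENNReal.ofReal (Real.exp (-(D / n))) ^ ((t + 1) ^ 2) := by
  set pairs : Finset (Finset (Fin n) × Finset (Fin n)) :=
    Finset.univ.filter fun q => Disjoint q.1 q.2 ∧ q.1.card = t + 1 ∧ q.2.card = t + 1
    with hpairs
  have hsub : {ω | EXP n t ω}ᶜ ⊆ ⋃ q ∈ pairs, Zset n q.1 q.2 := by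
    intro ω hω
    simp only [Set.mem_compl_iff, Set.mem_setOf_eq, EXP] at hω
    push_neg at hω
    obtain ⟨S, T, hd, hS, hT, hall⟩ := hω
    have hqmem : (S, T) ∈ pairs := by
      rw [hpairs, Finset.mem_filter]
      exact ⟨Finset.mem_univ _, hd, hS, hT⟩
    refine Set.mem_biUnion hqmem ?_
    rw [Zset]
    intro e _
    dsimp only
    split_ifs with he
    · rcases Finset.mem_product.mp he with ⟨h1, h2⟩
      have hfalse := hall e.1 h1 e.2 h2
      simp only [Set.mem_singleton_iff]
      have : ω (e.1, e.2) = false := by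
        cases hval : ω (e.1, e.2)
        · rfl
        · exact absurd hval hfalse
      simpa using this
    · trivial
  calc μpi n D {ω | EXP n t ω}ᶜ ≤ μpi n D (⋃ q ∈ pairs, Zset n q.1 q.2) := measure_mono hsub
    _ ≤ ∑ q ∈ pairs, μpi n D (Zset n q.1 q.2) := measure_biUnion_finset_le _ _
    _ ≤ pairs.card • (ENNReal.ofReal (Real.exp (-(D / n))) ^ ((t + 1) ^ 2)) := by
        apply Finset.sum_le_card_nsmul
        intro q hq
        rw [hpairs, Finset.mem_filter] at hq
        exact Zset_bound n D hD0 hq.2.1 hq.2.2.1 hq.2.2.2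
    _ ≤ ((2 ^ n * 2 ^ n : ℕ) : ℝ≥0∞) * ENNReal.ofReal (Real.exp (-(D / n))) ^ ((t + 1) ^ 2) := by
        rw [nsmul_eq_mul]
        apply mul_le_mul_left
        have hcard : pairs.card ≤ 2 ^ n * 2 ^ n := by
          calc pairs.card ≤ (Finset.univ : Finset (Finset (Fin n) × Finset (Fin n))).card :=
                Finset.card_filter_le _ _
            _ = 2 ^ n * 2 ^ n := by
                rw [Finset.card_univ, Fintype.card_prod, Fintype.card_finset, Fintype.card_fin]
        exact_mod_cast Nat.cast_le.mpr hcard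

lemma log32e : Real.log (32 * Real.exp 1) = 5 * Real.log 2 + 1 := by
  rw [Real.log_mul (by norm_num) (Real.exp_ne_zero 1), Real.log_exp,
    show (32 : ℝ) = 2 ^ 5 by norm_num, Real.log_pow]
  push_cast
  ring

lemma numeric (n : ℕ) (D : ℝ) (hn : 525 ≤ n) (hD : 256 * Real.log (32 * Real.exp 1) ≤ D) :
    ((2 ^ n * 2 ^ n : ℕ) : ℝ≥0∞) * ENNReal.ofReal (Real.exp (-(D / n))) ^ ((n / 16 + 1) ^ 2) ≤
      ENNReal.ofReal (Real.exp (-(D * n / 2 ^ 14))) := by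
  set t := n / 16 with ht
  have hD' : 1280 * Real.log 2 + 256 ≤ D := by
    rw [log32e] at hD
    linarith
  have hlog2 := Real.log_two_gt_d9
  have hn0 : (0 : ℝ) < n := by positivity
  have hnn : (525 : ℝ) ≤ (n : ℝ) := by exact_mod_cast hn
  have hD0 : (0 : ℝ) ≤ D := by nlinarith
  rw [show ((2 ^ n * 2 ^ n : ℕ) : ℝ≥0∞) = ENNReal.ofReal ((2 ^ n * 2 ^ n : ℕ) : ℝ) from
    (ENNReal.ofReal_natCast _).symm]
  rw [← ENNReal.ofReal_pow (Real.exp_nonneg _), ← ENNReal.ofReal_mul (by positivity)]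
  apply ENNReal.ofReal_le_ofReal
  rw [← Real.exp_nat_mul]
  have hN : ((2 ^ n * 2 ^ n : ℕ) : ℝ) = 2 ^ (2 * n) := by
    push_cast
    ring
  rw [hN, show (2 : ℝ) ^ (2 * n) = Real.exp ((2 * n : ℕ) * Real.log 2) from by
    rw [← Real.log_pow, Real.exp_log (by positivity)]]
  rw [← Real.exp_add]
  apply Real.exp_le_exp.mpr
  have htn : (n : ℝ) ≤ 16 * ((t : ℝ) + 1) := by
    have : n ≤ 16 * (t + 1) := by omega
    exact_mod_cast this
  have hm : (((t + 1) ^ 2 : ℕ) : ℝ) = ((t : ℝ) + 1) ^ 2 := by push_cast; ring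
  rw [hm]
  have hkey : D * n / 256 ≤ ((t : ℝ) + 1) ^ 2 * (D / n) := by
    have h1 : ((n : ℝ) / 16) ^ 2 ≤ ((t : ℝ) + 1) ^ 2 := by
      apply pow_le_pow_left₀ (by positivity)
      linarith
    have h2 : (D / n) * ((n : ℝ) / 16) ^ 2 ≤ (D / n) * ((t : ℝ) + 1) ^ 2 :=
      mul_le_mul_of_nonneg_left h1 (by positivity)
    have h3 : (D / n) * ((n : ℝ) / 16) ^ 2 = D * n / 256 := by
      field_simp
      ring
    linarith [h2, h3.symm.le]
  have hfinal : (2 * (n : ℝ)) * Real.log 2 + D * n / 2 ^ 14 ≤ D * n / 256 := by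
    nlinarith [mul_nonneg (sub_nonneg.mpr hD') (le_of_lt hn0),
      mul_pos hn0 (by linarith : (0:ℝ) < Real.log 2)]
  push_cast
  nlinarith [hkey, hfinal]

end Stmt13Aux


namespace PlantedMatching

/-- Lemma 5.4: a bipartite graph on `[n] × [n]'` whose red edges
form the perfect matching `{(i,i')}` and whose blue edges appear independently with
probability `D/n` (for `i ≠ j`) contains, with probability at least
`1 - exp(-Dn/2^14)`, at least `exp(n/20)` distinct alternating cycles of length at
least `3n/4`, provided `n ≥ 525` and `D ≥ 256 log(32e)`. -/
theorem stmt13 :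
    ∀ (n : ℕ) (D : ℝ), 525 ≤ n → 256 * Real.log (32 * Real.exp 1) ≤ D →
      ENNReal.ofReal (1 - Real.exp (-(D * n / 2 ^ 14))) ≤
        (Measure.pi fun e : Fin n × Fin n =>
            if e.1 = e.2 then Measure.dirac false else bernoulliBool (D / n))
          {ω | ∃ 𝒞 : Finset (Finset (Fin n × Fin n)),
              Real.exp ((n : ℝ) / 20) ≤ (𝒞.card : ℝ) ∧
              ∀ E ∈ 𝒞,
                IsAltCycleEdges Finset.univ
                  (fun i j => ω (i, j) = true ∧ i ≠ j) (3 * n / 4) E} := by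
  intro n D hn hD
  have hlog2 := Real.log_two_gt_d9
  have hD0 : (0 : ℝ) ≤ D := by
    rw [Stmt13Aux.log32e] at hD
    nlinarith
  have hD0' : 0 ≤ D / (n : ℝ) := by positivity
  set t := n / 16 with ht
  have hμ : (Measure.pi fun e : Fin n × Fin n =>
      if e.1 = e.2 then Measure.dirac false else bernoulliBool (D / n)) =
      Stmt13Aux.μpi n D := rfl
  rw [hμ]
  set Ev : Set (Fin n × Fin n → Bool) :=
    {ω | ∃ 𝒞 : Finset (Finset (Fin n × Fin n)),
        Real.exp ((n : ℝ) / 20) ≤ (𝒞.card : ℝ) ∧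
        ∀ E ∈ 𝒞, IsAltCycleEdges Finset.univ
          (fun i j => ω (i, j) = true ∧ i ≠ j) (3 * n / 4) E} with hEv
  have hsub : {ω | Stmt13Aux.EXP n t ω} ⊆ Ev := by
    intro ω hω
    exact Stmt13Aux.det hn ω hω
  have hcompl : Stmt13Aux.μpi n D {ω | Stmt13Aux.EXP n t ω}ᶜ ≤
      ENNReal.ofReal (Real.exp (-(D * n / 2 ^ 14))) :=
    le_trans (Stmt13Aux.union_bound n D hD0' t) (Stmt13Aux.numeric n D hn hD)
  have huniv : (1 : ℝ≥0∞) ≤ Stmt13Aux.μpi n D Set.univ := Stmt13Aux.μpi_univ_ge n D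
  have hsplit : Stmt13Aux.μpi n D Set.univ ≤
      Stmt13Aux.μpi n D {ω | Stmt13Aux.EXP n t ω} +
        Stmt13Aux.μpi n D {ω | Stmt13Aux.EXP n t ω}ᶜ := by
    rw [← Set.union_compl_self {ω | Stmt13Aux.EXP n t ω}]
    exact measure_union_le _ _
  calc ENNReal.ofReal (1 - Real.exp (-(D * n / 2 ^ 14)))
      = 1 - ENNReal.ofReal (Real.exp (-(D * n / 2 ^ 14))) := by
        rw [ENNReal.ofReal_sub _ (Real.exp_nonneg _), ENNReal.ofReal_one]
    _ ≤ Stmt13Aux.μpi n D {ω | Stmt13Aux.EXP n t ω} := by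
        rw [tsub_le_iff_right]
        calc (1 : ℝ≥0∞) ≤ Stmt13Aux.μpi n D Set.univ := huniv
          _ ≤ Stmt13Aux.μpi n D {ω | Stmt13Aux.EXP n t ω} +
              Stmt13Aux.μpi n D {ω | Stmt13Aux.EXP n t ω}ᶜ := hsplit
          _ ≤ Stmt13Aux.μpi n D {ω | Stmt13Aux.EXP n t ω} +
              ENNReal.ofReal (Real.exp (-(D * n / 2 ^ 14))) := by
                exact add_le_add_right hcompl _
    _ ≤ Stmt13Aux.μpi n D Ev := measure_mono hsub

end PlantedMatching
end
end
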